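/- arXiv:2409.04661 — 5 statements merged into one kernel-verified Lean document; each statement's English description precedes it below -/
import Mathlib

section
/- Let p be an odd prime, let d ≥ 1 be an integer, and let r be a unit modulo p² with r ≡ 1 (mod p). Then the hyper Kloosterman sum Kl_d(r; p²) is nonzero. -/
open scoped BigOperators

/-- `e(x) = exp(2πix)`. -/
noncomputable def e (x : ℂ) : ℂ := Complex.exp (2 * Real.pi * Complex.I * x)

/-- The hyper Kloosterman sum of dimension `d` and modulus `M` at a unit `r` mod `M`:
`Kl_d(r; M) = Σ_{n₁⋯n_d ≡ r (M)} e((n₁+⋯+n_d)/M)`. -/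
noncomputable def Kl (d M : ℕ) (r : (ZMod M)ˣ) : ℂ :=
  ∑ᶠ n : Fin d → (ZMod M)ˣ,
    if (∏ i, n i) = r then e (((∑ i, ((n i : ZMod M)).val : ℕ) : ℂ) / M) else 0

set_option linter.unusedSectionVars false
namespace KlAux
variable {p : ℕ} [hp : Fact p.Prime]
instance : NeZero (p ^ 2) := ⟨pow_ne_zero 2 hp.out.ne_zero⟩
def ι (x : ZMod p) : ZMod (p ^ 2) := (x.val : ZMod (p ^ 2))
def ρ : ZMod (p ^ 2) →+* ZMod p :=
  ZMod.castHom (dvd_pow_self p (by norm_num : (2 : ℕ) ≠ 0)) (ZMod p)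
lemma p_mul_p : (p : ZMod (p ^ 2)) * (p : ZMod (p ^ 2)) = 0 := by
  rw [← Nat.cast_mul, ← sq, ZMod.natCast_self]
lemma rho_natCast (n : ℕ) : ρ (p := p) (n : ZMod (p ^ 2)) = (n : ZMod p) := by simp [ρ]
lemma rho_iota (x : ZMod p) : ρ (ι x) = x := by rw [ι, rho_natCast, ZMod.natCast_zmod_val]
lemma rho_val (x : ZMod (p ^ 2)) : (ρ x).val = x.val % p := by
  conv_lhs => rw [← ZMod.natCast_zmod_val x]
  rw [rho_natCast, ZMod.val_natCast]
lemma pmul_eq (x : ZMod (p ^ 2)) : (p : ZMod (p ^ 2)) * x = p * ι (ρ x) := by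
  conv_lhs => rw [← ZMod.natCast_zmod_val x]
  rw [ι, rho_val, ← Nat.cast_mul, ← Nat.cast_mul]
  conv_lhs => rw [← Nat.div_add_mod x.val p]
  push_cast
  rw [mul_add, ← mul_assoc, p_mul_p, zero_mul, zero_add]
lemma pmul_congr {x y : ZMod (p ^ 2)} (h : ρ x = ρ y) :
    (p : ZMod (p ^ 2)) * x = p * y := by rw [pmul_eq x, pmul_eq y, h]
lemma exists_pmul {x : ZMod (p ^ 2)} (h : ρ x = 0) :
    ∃ c : ZMod (p ^ 2), x = (p : ZMod (p ^ 2)) * c := by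
  have hv : p ∣ x.val := by
    have := rho_val x
    rw [h, ZMod.val_zero] at this
    exact Nat.dvd_of_mod_eq_zero this.symm
  obtain ⟨k, hk⟩ := hv
  refine ⟨(k : ZMod (p ^ 2)), ?_⟩
  rw [← Nat.cast_mul, ← hk, ZMod.natCast_zmod_val]
lemma pow_succ_of_sq_zero {R : Type*} [CommRing R] {y z : R} (hz : z ^ 2 = 0) (n : ℕ) :
    (y + z) ^ (n + 1) = y ^ (n + 1) + (n + 1) * y ^ n * z := by
  induction n with
  | zero => ring
  | succ n ih =>
    rw [pow_succ, ih]; push_cast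
    linear_combination ((n : R) + 1) * y ^ n * hz

-- NEW PART
lemma sq_pmul_zero (c : ZMod (p ^ 2)) : ((p : ZMod (p ^ 2)) * c) ^ 2 = 0 := by
  have h : ((p : ZMod (p ^ 2)) * c) ^ 2 = ((p : ZMod (p ^ 2)) * p) * (c * c) := by ring
  rw [h, p_mul_p, zero_mul]

/-- `(y + p*c)^p = y^p` in `ZMod (p^2)`. -/
lemma pow_p_eq {y c : ZMod (p ^ 2)} : (y + (p : ZMod (p ^ 2)) * c) ^ p = y ^ p := by
  have h := pow_succ_of_sq_zero (sq_pmul_zero c) (p - 1) (y := y)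
  rw [Nat.sub_add_cancel hp.out.one_le] at h
  rw [h]
  have hc : ((p - 1 : ℕ) : ZMod (p ^ 2)) + 1 = (p : ZMod (p ^ 2)) := by
    rw [← Nat.cast_one (R := ZMod (p ^ 2)), ← Nat.cast_add, Nat.sub_add_cancel hp.out.one_le]
  rw [hc]
  have h2 : ((p : ZMod (p ^ 2)) : ZMod (p ^ 2)) * y ^ (p - 1) * ((p : ZMod (p ^ 2)) * c) =
      ((p : ZMod (p ^ 2)) * p) * (y ^ (p - 1) * c) := by ring
  rw [h2, p_mul_p, zero_mul, add_zero]

/-- Teichmüller-style lift. -/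
def τ (a : ZMod p) : ZMod (p ^ 2) := (ι a) ^ p

lemma rho_tau (a : ZMod p) : ρ (τ a) = a := by
  rw [τ, map_pow, rho_iota, ZMod.pow_card]

lemma tau_mul (a b : ZMod p) : τ (a * b) = τ a * τ b := by
  have h : ρ (ι (a * b) - ι a * ι b) = 0 := by
    rw [map_sub, map_mul, rho_iota, rho_iota, rho_iota, sub_self]
  obtain ⟨c, hc⟩ := exists_pmul h
  have : ι (a * b) = ι a * ι b + (p : ZMod (p ^ 2)) * c := by
    linear_combination hc
  rw [τ, this, pow_p_eq, mul_pow]; rfl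

lemma tau_one : τ (1 : ZMod p) = 1 := by
  have : ι (1 : ZMod p) = 1 := by
    rw [ι, ZMod.val_one, Nat.cast_one]
  rw [τ, this, one_pow]

/-- τ on units, as a monoid hom. -/
def Tu : (ZMod p)ˣ →* (ZMod (p ^ 2))ˣ :=
  { toFun := fun u => ⟨τ u, τ (u⁻¹ : (ZMod p)ˣ),
      by rw [← tau_mul, Units.mul_inv, tau_one],
      by rw [← tau_mul, Units.inv_mul, tau_one]⟩
    map_one' := by ext; exact (by rw [Units.val_one, tau_one] : τ ((1 : (ZMod p)ˣ) : ZMod p) = 1)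
    map_mul' := fun a b => by ext; exact (by rw [Units.val_mul, tau_mul] :
      τ ((a * b : (ZMod p)ˣ) : ZMod p) = τ (a : ZMod p) * τ (b : ZMod p)) }

lemma Tu_val (u : (ZMod p)ˣ) : ((Tu u : (ZMod (p ^ 2))ˣ) : ZMod (p ^ 2)) = τ u := rfl

/-- the unit `1 + p * ι t`. -/
def κ (t : ZMod p) : (ZMod (p ^ 2))ˣ :=
  ⟨1 + (p : ZMod (p ^ 2)) * ι t, 1 - (p : ZMod (p ^ 2)) * ι t,
    by linear_combination - sq_pmul_zero (ι t),
    by linear_combination - sq_pmul_zero (ι t)⟩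

lemma kappa_val (t : ZMod p) : ((κ t : (ZMod (p ^ 2))ˣ) : ZMod (p ^ 2)) = 1 + (p : ZMod (p ^ 2)) * ι t := rfl

lemma kappa_zero : κ (0 : ZMod p) = 1 := by
  ext
  rw [kappa_val]
  have : ι (0 : ZMod p) = 0 := by simp [ι]
  simp [this]

lemma kappa_add (s t : ZMod p) : κ (s + t) = κ s * κ t := by
  ext
  rw [Units.val_mul, kappa_val, kappa_val, kappa_val]
  have h1 : (p : ZMod (p ^ 2)) * ι (s + t) = p * (ι s + ι t) := by
    apply pmul_congr
    rw [map_add, rho_iota, rho_iota, rho_iota]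
  have h2 : ((p : ZMod (p ^ 2)) * ι s) * ((p : ZMod (p ^ 2)) * ι t) = 0 := by
    rw [mul_mul_mul_comm, p_mul_p, zero_mul]
  linear_combination h1 - h2


def E (a : (ZMod p)ˣ) (t : ZMod p) : (ZMod (p ^ 2))ˣ := Tu a * κ t

/-- reduction on units -/
def ρu : (ZMod (p ^ 2))ˣ →* (ZMod p)ˣ := Units.map (ρ (p := p)).toMonoidHom

lemma rho_kappa (t : ZMod p) : ρu (κ t) = 1 := by
  ext
  show ρ ((κ t : (ZMod (p ^ 2))ˣ) : ZMod (p ^ 2)) = 1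
  rw [kappa_val, map_add, map_mul, map_one, rho_natCast, ZMod.natCast_self, zero_mul, add_zero]

lemma rho_Tu (u : (ZMod p)ˣ) : ρu (Tu u) = u := by
  ext
  show ρ (τ (u : ZMod p)) = (u : ZMod p)
  exact rho_tau _

lemma rho_E (a : (ZMod p)ˣ) (t : ZMod p) : ρu (E a t) = a := by
  rw [E, map_mul, rho_Tu, rho_kappa, mul_one]

lemma kappa_inj : Function.Injective (κ (p := p)) := by
  intro s t h
  have h2 : (p : ZMod (p ^ 2)) * ι s = (p : ZMod (p ^ 2)) * ι t := by
    have := congrArg (fun u : (ZMod (p ^ 2))ˣ => (u : ZMod (p ^ 2))) h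
    simp only [kappa_val] at this
    linear_combination this
  have hs : ((p * s.val : ℕ) : ZMod (p ^ 2)) = ((p * t.val : ℕ) : ZMod (p ^ 2)) := by
    push_cast; exact h2
  have hlt : ∀ x : ZMod p, p * x.val < p ^ 2 := by
    intro x
    have := ZMod.val_lt x
    calc p * x.val < p * p := (Nat.mul_lt_mul_left hp.out.pos).mpr this
      _ = p ^ 2 := (sq p).symm
  have := congrArg ZMod.val hs
  rw [ZMod.val_natCast_of_lt (hlt s), ZMod.val_natCast_of_lt (hlt t)] at this
  have := Nat.eq_of_mul_eq_mul_left hp.out.pos this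
  exact ZMod.val_injective p this

lemma E_inj : Function.Injective (fun x : (ZMod p)ˣ × ZMod p => E x.1 x.2) := by
  rintro ⟨a, s⟩ ⟨b, t⟩ h
  simp only at h
  have hab : a = b := by
    have := congrArg ρu h
    rwa [rho_E, rho_E] at this
  subst hab
  have : κ s = κ t := by
    rw [E, E] at h
    exact mul_left_cancel h
  exact Prod.ext rfl (kappa_inj this)

lemma E_bij : Function.Bijective (fun x : (ZMod p)ˣ × ZMod p => E x.1 x.2) := by
  rw [Fintype.bijective_iff_injective_and_card]
  refine ⟨E_inj, ?_⟩
  rw [Fintype.card_prod, ZMod.card_units_eq_totient, ZMod.card_units_eq_totient,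
    ZMod.card, Nat.totient_prime_pow hp.out (by norm_num : 0 < 2),
    Nat.totient_prime hp.out]
  ring


noncomputable section

open Complex

/-- primitive p²-th root of unity. -/
def ζ (p : ℕ) : ℂ := Complex.exp (2 * Real.pi * Complex.I / ((p ^ 2 : ℕ) : ℂ))

lemma zeta_prim : IsPrimitiveRoot (ζ p) (p ^ 2) :=
  Complex.isPrimitiveRoot_exp _ (pow_ne_zero 2 hp.out.ne_zero)

lemma zeta_pow_q : (ζ p) ^ (p ^ 2) = 1 := zeta_prim.pow_eq_one

lemma pow_mod_of_pow_eq_one {u : ℂ} {m : ℕ} (h : u ^ m = 1) (n : ℕ) :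
    u ^ (n % m) = u ^ n := by
  conv_rhs => rw [← Nat.div_add_mod n m, pow_add, pow_mul, h, one_pow, one_mul]

/-- additive character of `ZMod (p^2)`. -/
def ψ (x : ZMod (p ^ 2)) : ℂ := (ζ p) ^ x.val

lemma psi_add (x y : ZMod (p ^ 2)) : ψ (x + y) = ψ x * ψ y := by
  rw [ψ, ψ, ψ, ZMod.val_add, pow_mod_of_pow_eq_one zeta_pow_q, pow_add]

/-- additive character of `ZMod p`, `χ t = ζ^(p t)`. -/
def χ (t : ZMod p) : ℂ := ((ζ p) ^ p) ^ t.val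

lemma omega_pow_p : ((ζ p) ^ p) ^ p = 1 := by
  rw [← pow_mul, ← sq, zeta_pow_q]

lemma omega_ne_one : (ζ p) ^ p ≠ 1 :=
  zeta_prim.pow_ne_one_of_pos_of_lt hp.out.ne_zero
    (by
      have := hp.out.one_lt
      calc p = p * 1 := (mul_one p).symm
      _ < p * p := (Nat.mul_lt_mul_left hp.out.pos).mpr this
      _ = p ^ 2 := (sq p).symm)

lemma chi_add (x y : ZMod p) : χ (x + y) = χ x * χ y := by
  rw [χ, χ, χ, ZMod.val_add, pow_mod_of_pow_eq_one omega_pow_p, pow_add]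

lemma chi_zero : χ (0 : ZMod p) = 1 := by
  rw [χ, ZMod.val_zero, pow_zero]

lemma chi_neg_mul (x : ZMod p) : χ (-x) * χ x = 1 := by
  rw [← chi_add, neg_add_cancel, chi_zero]

lemma psi_pmul (x : ZMod (p ^ 2)) : ψ ((p : ZMod (p ^ 2)) * x) = χ (ρ x) := by
  rw [pmul_eq]
  rw [ψ, χ]
  have hval : ((p : ZMod (p ^ 2)) * ι (ρ x)).val = p * (ρ x).val := by
    have h1 : (p : ZMod (p ^ 2)) * ι (ρ x) = ((p * (ρ x).val : ℕ) : ZMod (p ^ 2)) := by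
      rw [ι]; push_cast; ring
    rw [h1, ZMod.val_natCast_of_lt]
    calc p * (ρ x).val < p * p := (Nat.mul_lt_mul_left hp.out.pos).mpr (ZMod.val_lt _)
      _ = p ^ 2 := (sq p).symm
  rw [hval, pow_mul]

/-- orthogonality -/
lemma sum_chi_mul (b : ZMod p) :
    ∑ t : ZMod p, χ (b * t) = if b = 0 then (p : ℂ) else 0 := by
  split_ifs with hb
  · subst hb
    simp only [zero_mul, chi_zero]
    rw [Finset.sum_const, Finset.card_univ, ZMod.card]
    simp
  · have h1 : ∑ t : ZMod p, χ (b * t) = ∑ t : ZMod p, χ t := by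
      exact Fintype.sum_equiv (Equiv.mulLeft₀ b hb) _ _ (fun t => rfl)
    rw [h1]
    have h2 : ∑ t : ZMod p, χ t = ∑ k ∈ Finset.range p, ((ζ p) ^ p) ^ k := by
      refine Finset.sum_nbij' (fun t => t.val) (fun k => (k : ZMod p)) ?_ ?_ ?_ ?_ ?_
      · intro t _; exact Finset.mem_range.mpr (ZMod.val_lt t)
      · intro k _; exact Finset.mem_univ _
      · intro t _; exact ZMod.natCast_zmod_val t
      · intro k hk; exact ZMod.val_natCast_of_lt (Finset.mem_range.mp hk)
      · intro t _; rfl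
    rw [h2, geom_sum_eq omega_ne_one, omega_pow_p, sub_self, zero_div]


open Polynomial in
lemma sum_zeta_pow_ne_zero {α : Type*} [DecidableEq α] (B : Finset α) (m : α → ℕ)
    (h1 : B.Nonempty) (h2 : B.card < p) :
    ∑ b ∈ B, (ζ p) ^ (m b) ≠ 0 := by
  intro h
  set P : ℤ[X] := ∑ b ∈ B, X ^ (m b) with hP
  have haev : aeval (ζ p) P = 0 := by
    rw [hP, map_sum]
    simpa using h
  have hint : IsIntegral ℤ (ζ p) :=
    (zeta_prim (p := p)).isIntegral (pow_pos hp.out.pos 2)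
  have hdvd : minpoly ℤ (ζ p) ∣ P := minpoly.isIntegrallyClosed_dvd hint haev
  rw [← Polynomial.cyclotomic_eq_minpoly zeta_prim (pow_pos hp.out.pos 2)] at hdvd
  obtain ⟨Q, hQ⟩ := hdvd
  have heval : P.eval 1 = (B.card : ℤ) := by
    rw [hP, eval_finset_sum]
    simp
  have hc : (cyclotomic (p ^ 2) ℤ).eval 1 = (p : ℤ) := by
    have h21 : (2 : ℕ) = 1 + 1 := rfl
    rw [h21, Polynomial.eval_one_cyclotomic_prime_pow 1]
  have : (p : ℤ) ∣ (B.card : ℤ) := by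
    rw [← heval, hQ, eval_mul, hc]
    exact Dvd.intro _ rfl
  have hpd : p ∣ B.card := Int.ofNat_dvd.mp this
  have := Nat.le_of_dvd (Finset.card_pos.mpr h1) hpd
  omega

end


lemma kappa_sum {ι : Type*} (sf : Finset ι) (f : ι → ZMod p) :
    ∏ i ∈ sf, κ (f i) = κ (∑ i ∈ sf, f i) := by
  induction sf using Finset.cons_induction with
  | empty => simp [kappa_zero]
  | cons i sf hi ih =>
    rw [Finset.prod_cons, Finset.sum_cons, ih, kappa_add]

lemma chi_sum {ι : Type*} (sf : Finset ι) (f : ι → ZMod p) :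
    χ (∑ i ∈ sf, f i) = ∏ i ∈ sf, χ (f i) := by
  induction sf using Finset.cons_induction with
  | empty => simp [chi_zero]
  | cons i sf hi ih =>
    rw [Finset.prod_cons, Finset.sum_cons, chi_add, ih]

lemma chi_neg (x : ZMod p) : χ (-x) = (χ x)⁻¹ :=
  eq_inv_of_mul_eq_one_left (chi_neg_mul x)

lemma psi_E (a : (ZMod p)ˣ) (t : ZMod p) :
    ψ ((E a t : (ZMod (p ^ 2))ˣ) : ZMod (p ^ 2)) = ψ (τ (a : ZMod p)) * χ ((a : ZMod p) * t) := by
  have hval : ((E a t : (ZMod (p ^ 2))ˣ) : ZMod (p ^ 2))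
      = τ (a : ZMod p) + (p : ZMod (p ^ 2)) * (τ (a : ZMod p) * ι t) := by
    show (Tu a * κ t : (ZMod (p ^ 2))ˣ).val = _
    rw [Units.val_mul, Tu_val, kappa_val]
    ring
  rw [hval, psi_add, psi_pmul, map_mul, rho_tau, rho_iota]

lemma e_div (N : ℕ) : e ((N : ℂ) / ((p ^ 2 : ℕ) : ℂ)) = (ζ p) ^ N := by
  rw [e, ζ, ← Complex.exp_nat_mul]
  congr 1
  ring


lemma p_ne_zero_C : (p : ℂ) ≠ 0 := Nat.cast_ne_zero.mpr hp.out.ne_zero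

lemma inner_sum (d : ℕ) (a : Fin d → (ZMod p)ˣ) (s : ZMod p) :
    ∑ t : Fin d → ZMod p, (if ∑ i, t i = s then ∏ i, χ ((a i : ZMod p) * t i) else 0)
    = (p : ℂ)⁻¹ * ∑ c : ZMod p, (χ (s * c))⁻¹ *
        ∏ i, (if ((a i : ZMod p) + c) = 0 then (p : ℂ) else 0) := by
  have key : ∀ t : Fin d → ZMod p,
      (if ∑ i, t i = s then ∏ i, χ ((a i : ZMod p) * t i) else 0)
      = (p : ℂ)⁻¹ * ∑ c : ZMod p, χ (((∑ i, t i) - s) * c) * ∏ i, χ ((a i : ZMod p) * t i) := by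
    intro t
    rw [← Finset.sum_mul, sum_chi_mul ((∑ i, t i) - s)]
    by_cases h : ∑ i, t i = s
    · rw [if_pos h, if_pos (by rw [h, sub_self]), inv_mul_cancel_left₀ p_ne_zero_C]
    · rw [if_neg h, if_neg (fun hc => h (sub_eq_zero.mp hc)), zero_mul, mul_zero]
  rw [Finset.sum_congr rfl (fun t _ => key t), ← Finset.mul_sum]
  congr 1
  rw [Finset.sum_comm]
  refine Finset.sum_congr rfl (fun c _ => ?_)
  have step : ∀ t : Fin d → ZMod p,
      χ (((∑ i, t i) - s) * c) * ∏ i, χ ((a i : ZMod p) * t i)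
      = (χ (s * c))⁻¹ * ∏ i, χ (((a i : ZMod p) + c) * t i) := by
    intro t
    have h1 : ((∑ i, t i) - s) * c = (∑ i, c * t i) + -(s * c) := by
      rw [sub_mul, Finset.sum_mul, sub_eq_add_neg]
      congr 1
      exact Finset.sum_congr rfl (fun i _ => mul_comm _ _)
    have h2 : (∏ i, χ (c * t i)) * ∏ i, χ ((a i : ZMod p) * t i)
        = ∏ i, χ (((a i : ZMod p) + c) * t i) := by
      rw [← Finset.prod_mul_distrib]
      refine Finset.prod_congr rfl (fun i _ => ?_)
      rw [← chi_add]
      congr 1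
      ring
    rw [h1, chi_add, chi_sum, chi_neg, mul_right_comm, h2, mul_comm]
  rw [Finset.sum_congr rfl (fun t _ => step t), ← Finset.mul_sum]
  congr 1
  have := Finset.prod_univ_sum (fun _i : Fin d => (Finset.univ : Finset (ZMod p)))
    (fun i x => χ (((a i : ZMod p) + c) * x))
  rw [Fintype.piFinset_univ] at this
  rw [← this]
  exact Finset.prod_congr rfl (fun i _ => sum_chi_mul _)


open Finset in
lemma outer_sum (d : ℕ) (hd : 1 ≤ d) (c : ZMod p) :
    ∑ a : Fin d → (ZMod p)ˣ, (if ∏ i, a i = 1 then ∏ i, ψ (τ ((a i : ZMod p))) else 0) *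
        ∏ i, (if ((a i : ZMod p) + c) = 0 then (p : ℂ) else 0)
    = ∑ b : (ZMod p)ˣ, if c = -(b : ZMod p) then
        (if b ^ d = 1 then ψ (τ ((b : ZMod p))) ^ d * (p : ℂ) ^ d else 0) else 0 := by
  classical
  have i₀ : Fin d := ⟨0, hd⟩
  have hprod : ∀ a : Fin d → (ZMod p)ˣ,
      (∏ i, (if ((a i : ZMod p) + c) = 0 then (p : ℂ) else 0))
      = if (∀ i, (a i : ZMod p) = -c) then (p : ℂ) ^ d else 0 := by
    intro a
    by_cases h : ∀ i, (a i : ZMod p) = -c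
    · rw [if_pos h]
      have : ∀ i : Fin d, (if ((a i : ZMod p) + c) = 0 then (p : ℂ) else 0) = (p : ℂ) := by
        intro i
        rw [if_pos (by rw [h i]; ring)]
      rw [Finset.prod_congr rfl (fun i _ => this i), Finset.prod_const, Finset.card_univ,
        Fintype.card_fin]
    · rw [if_neg h]
      push_neg at h
      obtain ⟨i₁, hi₁⟩ := h
      refine Finset.prod_eq_zero (Finset.mem_univ i₁) ?_
      rw [if_neg (fun hc => hi₁ (by linear_combination hc))]
  rw [Finset.sum_congr rfl (fun a _ => by rw [hprod a])]
  by_cases h : ∃ b : (ZMod p)ˣ, (b : ZMod p) = -c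
  · obtain ⟨b, hb⟩ := h
    have hcb : c = -(b : ZMod p) := by rw [hb, neg_neg]
    have hconst : ∀ a : Fin d → (ZMod p)ˣ, (∀ i, (a i : ZMod p) = -c) ↔ a = fun _ => b := by
      intro a
      constructor
      · intro ha
        funext i
        exact Units.ext (by rw [ha i, hb])
      · intro ha
        intro i
        rw [ha]
        exact hb
    have hL : ∀ a : Fin d → (ZMod p)ˣ,
        (if ∏ i, a i = 1 then ∏ i, ψ (τ ((a i : ZMod p))) else 0) *
          (if (∀ i, (a i : ZMod p) = -c) then (p : ℂ) ^ d else 0)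
        = if a = (fun _ => b) then
            (if ∏ i, a i = 1 then ∏ i, ψ (τ ((a i : ZMod p))) else 0) * (p : ℂ) ^ d else 0 := by
      intro a
      by_cases ha : a = fun _ => b
      · rw [if_pos ha, if_pos ((hconst a).mpr ha)]
      · rw [if_neg ha, if_neg (fun hc => ha ((hconst a).mp hc)), mul_zero]
    rw [Finset.sum_congr rfl (fun a _ => hL a), Finset.sum_ite_eq' Finset.univ _ _,
      if_pos (Finset.mem_univ _)]
    have hprodb : (∏ _i : Fin d, b) = b ^ d := by
      rw [Finset.prod_const, Finset.card_univ, Fintype.card_fin]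
    have hpsib : (∏ _i : Fin d, ψ (τ ((b : ZMod p)))) = ψ (τ ((b : ZMod p))) ^ d := by
      rw [Finset.prod_const, Finset.card_univ, Fintype.card_fin]
    rw [Finset.sum_eq_single b
      (fun b' _ hbne => if_neg (fun hc => hbne (Units.ext (by rw [hb, hc, neg_neg]))))
      (fun hmem => absurd (Finset.mem_univ b) hmem)]
    rw [if_pos hcb, hprodb, hpsib, ite_mul, zero_mul]
  · push_neg at h
    rw [Finset.sum_eq_zero, Finset.sum_eq_zero]
    · intro b _
      rw [if_neg (fun hc => h b (by rw [hc, neg_neg]))]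
    · intro a _
      rw [if_neg (fun hc : ∀ i, (a i : ZMod p) = -c => h (a i₀) (hc i₀)), mul_zero]


set_option maxHeartbeats 1000000 in
open Finset in
lemma Kl_eq (d : ℕ) (hd : 1 ≤ d) (s : ZMod p) :
    Kl d (p ^ 2) (κ s) = (p : ℂ)⁻¹ * ((p : ℂ) ^ d *
      ∑ b ∈ Finset.univ.filter (fun b : (ZMod p)ˣ => b ^ d = 1),
        (ζ p) ^ ((τ ((b : ZMod p))).val * d + p * (s * (b : ZMod p)).val)) := by
  classical
  -- Step A : finsum to sum, and phase to product of ψ's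
  have stepA : Kl d (p ^ 2) (κ s)
      = ∑ n : Fin d → (ZMod (p ^ 2))ˣ,
          (if ∏ i, n i = κ s then ∏ i, ψ ((n i : (ZMod (p ^ 2))ˣ) : ZMod (p ^ 2)) else 0) := by
    rw [Kl, finsum_eq_sum_of_fintype]
    refine Finset.sum_congr rfl (fun n _ => ?_)
    by_cases h : ∏ i, n i = κ s
    · rw [if_pos h, if_pos h, e_div, ← Finset.prod_pow_eq_pow_sum]
      rfl
    · rw [if_neg h, if_neg h]
  -- Step B : reindex by E
  have hfbij : Function.Bijective
      (fun (x : (Fin d → (ZMod p)ˣ) × (Fin d → ZMod p)) (i : Fin d) => E (x.1 i) (x.2 i)) := by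
    constructor
    · rintro ⟨a, t⟩ ⟨a', t'⟩ h
      have hcomp : ∀ i, E (a i) (t i) = E (a' i) (t' i) := fun i => congrFun h i
      have hpair : ∀ i, (a i, t i) = (a' i, t' i) := fun i => E_inj (hcomp i)
      refine Prod.ext (funext fun i => ?_) (funext fun i => ?_)
      · exact congrArg Prod.fst (hpair i)
      · exact congrArg Prod.snd (hpair i)
    · intro n
      have hsur := fun i => E_bij.surjective (n i)
      exact ⟨(fun i => (hsur i).choose.1, fun i => (hsur i).choose.2),
        funext fun i => (hsur i).choose_spec⟩
  have stepB : ∑ n : Fin d → (ZMod (p ^ 2))ˣ,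
        (if ∏ i, n i = κ s then ∏ i, ψ ((n i : (ZMod (p ^ 2))ˣ) : ZMod (p ^ 2)) else 0)
      = ∑ a : Fin d → (ZMod p)ˣ, ∑ t : Fin d → ZMod p,
          (if ∏ i, E (a i) (t i) = κ s then
            ∏ i, ψ ((E (a i) (t i) : (ZMod (p ^ 2))ˣ) : ZMod (p ^ 2)) else 0) := by
    rw [← Fintype.sum_bijective _ hfbij _
      (fun n => if ∏ i, n i = κ s then
        ∏ i, ψ ((n i : (ZMod (p ^ 2))ˣ) : ZMod (p ^ 2)) else 0)
      (fun x => rfl), Fintype.sum_prod_type]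
  -- Step C : split the condition and the phase
  have stepC : ∀ (a : Fin d → (ZMod p)ˣ) (t : Fin d → ZMod p),
      (if ∏ i, E (a i) (t i) = κ s then
        ∏ i, ψ ((E (a i) (t i) : (ZMod (p ^ 2))ˣ) : ZMod (p ^ 2)) else 0)
      = (if ∏ i, a i = 1 then ∏ i, ψ (τ ((a i : ZMod p))) else 0) *
          (if ∑ i, t i = s then ∏ i, χ ((a i : ZMod p) * t i) else 0) := by
    intro a t
    have hEprod : ∏ i, E (a i) (t i) = Tu (∏ i, a i) * κ (∑ i, t i) := by
      simp only [E]
      rw [Finset.prod_mul_distrib, ← map_prod, kappa_sum]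
    have hcond : (∏ i, E (a i) (t i) = κ s) ↔ (∏ i, a i = 1 ∧ ∑ i, t i = s) := by
      rw [hEprod]
      constructor
      · intro h
        have h2 : E (∏ i, a i) (∑ i, t i) = E 1 s := by
          rw [E, E, map_one, one_mul]
          exact h
        have h3 : ((∏ i, a i, ∑ i, t i) : (ZMod p)ˣ × ZMod p) = (1, s) :=
          E_inj (show (fun x : (ZMod p)ˣ × ZMod p => E x.1 x.2) (∏ i, a i, ∑ i, t i)
            = (fun x : (ZMod p)ˣ × ZMod p => E x.1 x.2) (1, s) from h2)
        exact ⟨congrArg Prod.fst h3, congrArg Prod.snd h3⟩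
      · rintro ⟨h1, h2⟩
        rw [h1, h2, map_one, one_mul]
    have hphase : ∏ i, ψ ((E (a i) (t i) : (ZMod (p ^ 2))ˣ) : ZMod (p ^ 2))
        = (∏ i, ψ (τ ((a i : ZMod p)))) * ∏ i, χ ((a i : ZMod p) * t i) := by
      rw [← Finset.prod_mul_distrib]
      exact Finset.prod_congr rfl (fun i _ => psi_E (a i) (t i))
    by_cases h1 : ∏ i, a i = 1
    · by_cases h2 : ∑ i, t i = s
      · rw [if_pos (hcond.mpr ⟨h1, h2⟩), if_pos h1, if_pos h2, hphase]
      · rw [if_neg (fun hc => h2 (hcond.mp hc).2), if_neg h2, mul_zero]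
    · rw [if_neg (fun hc => h1 (hcond.mp hc).1), if_neg h1, zero_mul]
  rw [stepA, stepB]
  rw [Finset.sum_congr rfl (fun a _ => Finset.sum_congr rfl (fun t _ => stepC a t))]
  -- Step D : pull out the a-factor and use inner_sum, then rearrange per (a,c)
  have stepD : ∀ a : Fin d → (ZMod p)ˣ,
      ∑ t : Fin d → ZMod p,
        (if ∏ i, a i = 1 then ∏ i, ψ (τ ((a i : ZMod p))) else 0) *
          (if ∑ i, t i = s then ∏ i, χ ((a i : ZMod p) * t i) else 0)
      = ∑ c : ZMod p, (p : ℂ)⁻¹ * ((χ (s * c))⁻¹ *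
          ((if ∏ i, a i = 1 then ∏ i, ψ (τ ((a i : ZMod p))) else 0) *
            ∏ i, (if ((a i : ZMod p) + c) = 0 then (p : ℂ) else 0))) := by
    intro a
    rw [← Finset.mul_sum, inner_sum, ← mul_assoc, Finset.mul_sum]
    exact Finset.sum_congr rfl (fun c _ => by ring)
  rw [Finset.sum_congr rfl (fun a _ => stepD a), Finset.sum_comm]
  -- Step E : for each c use outer_sum
  have stepE : ∀ c : ZMod p,
      ∑ a : Fin d → (ZMod p)ˣ, (p : ℂ)⁻¹ * ((χ (s * c))⁻¹ *
          ((if ∏ i, a i = 1 then ∏ i, ψ (τ ((a i : ZMod p))) else 0) *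
            ∏ i, (if ((a i : ZMod p) + c) = 0 then (p : ℂ) else 0)))
      = (p : ℂ)⁻¹ * ((χ (s * c))⁻¹ *
          ∑ b : (ZMod p)ˣ, if c = -(b : ZMod p) then
            (if b ^ d = 1 then ψ (τ ((b : ZMod p))) ^ d * (p : ℂ) ^ d else 0) else 0) := by
    intro c
    rw [← Finset.mul_sum, ← Finset.mul_sum, outer_sum d hd c]
  rw [Finset.sum_congr rfl (fun c _ => stepE c)]
  -- Step F : swap again and collapse the c-sum
  have stepF : ∑ c : ZMod p, (p : ℂ)⁻¹ * ((χ (s * c))⁻¹ *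
        ∑ b : (ZMod p)ˣ, if c = -(b : ZMod p) then
          (if b ^ d = 1 then ψ (τ ((b : ZMod p))) ^ d * (p : ℂ) ^ d else 0) else 0)
      = (p : ℂ)⁻¹ * ∑ b : (ZMod p)ˣ,
          (if b ^ d = 1 then χ (s * (b : ZMod p)) * (ψ (τ ((b : ZMod p))) ^ d * (p : ℂ) ^ d)
            else 0) := by
    have h1 : ∀ c : ZMod p, (p : ℂ)⁻¹ * ((χ (s * c))⁻¹ *
        ∑ b : (ZMod p)ˣ, if c = -(b : ZMod p) then
          (if b ^ d = 1 then ψ (τ ((b : ZMod p))) ^ d * (p : ℂ) ^ d else 0) else 0)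
        = ∑ b : (ZMod p)ˣ, (p : ℂ)⁻¹ * (if c = -(b : ZMod p) then
            (χ (s * c))⁻¹ * (if b ^ d = 1 then ψ (τ ((b : ZMod p))) ^ d * (p : ℂ) ^ d else 0)
              else 0) := by
      intro c
      rw [Finset.mul_sum, Finset.mul_sum]
      refine Finset.sum_congr rfl (fun b _ => ?_)
      by_cases hcb : c = -(b : ZMod p)
      · rw [if_pos hcb, if_pos hcb]
      · rw [if_neg hcb, if_neg hcb]
        ring
    rw [Finset.sum_congr rfl (fun c _ => h1 c), Finset.sum_comm, Finset.mul_sum]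
    refine Finset.sum_congr rfl (fun b _ => ?_)
    rw [← Finset.mul_sum, Finset.sum_ite_eq' Finset.univ (-(b : ZMod p))
      (fun c => (χ (s * c))⁻¹ * (if b ^ d = 1 then ψ (τ ((b : ZMod p))) ^ d * (p : ℂ) ^ d else 0)),
      if_pos (Finset.mem_univ _)]
    have hneg : (χ (s * -(b : ZMod p)))⁻¹ = χ (s * (b : ZMod p)) := by
      rw [show s * -(b : ZMod p) = -(s * (b : ZMod p)) by ring, chi_neg, inv_inv]
    rw [hneg]
    by_cases hb : b ^ d = 1
    · rw [if_pos hb, if_pos hb]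
    · rw [if_neg hb, if_neg hb, mul_zero, mul_zero]
  rw [stepF]
  -- Step G : final reshaping
  congr 1
  rw [Finset.mul_sum, Finset.sum_filter]
  refine Finset.sum_congr rfl (fun b _ => ?_)
  by_cases hb : b ^ d = 1
  · rw [if_pos hb, if_pos hb]
    have hchi : χ (s * (b : ZMod p)) = (ζ p) ^ (p * (s * (b : ZMod p)).val) := by
      rw [χ, ← pow_mul]
    have hpsi : ψ (τ ((b : ZMod p))) ^ d = (ζ p) ^ ((τ ((b : ZMod p))).val * d) := by
      rw [ψ, ← pow_mul]
    calc χ (s * (b : ZMod p)) * (ψ (τ ((b : ZMod p))) ^ d * (p : ℂ) ^ d)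
        = (p : ℂ) ^ d * ((ζ p) ^ ((τ ((b : ZMod p))).val * d) * (ζ p) ^ (p * (s * (b : ZMod p)).val)) := by
          rw [hchi, hpsi]; ring
      _ = (p : ℂ) ^ d * (ζ p) ^ ((τ ((b : ZMod p))).val * d + p * (s * (b : ZMod p)).val) := by
          rw [← pow_add]
  · rw [if_neg hb, if_neg hb]


end KlAux

theorem stmt1 (p : ℕ) [Fact p.Prime] (hodd : Odd p) (d : ℕ) (hd : 1 ≤ d)
    (r : (ZMod (p ^ 2))ˣ)
    (hr : ZMod.castHom (dvd_pow_self p (by norm_num : (2 : ℕ) ≠ 0)) (ZMod p)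
        (r : ZMod (p ^ 2)) = 1) :
    Kl d (p ^ 2) r ≠ 0 := by
  classical
  obtain ⟨x, hx⟩ := (KlAux.E_bij (p := p)).surjective r
  have hx' : KlAux.E x.1 x.2 = r := hx
  have hx1 : x.1 = 1 := by
    have h1 : KlAux.ρu (KlAux.E x.1 x.2) = x.1 := KlAux.rho_E x.1 x.2
    rw [hx'] at h1
    have h2 : KlAux.ρu r = 1 := Units.ext hr
    rw [h2] at h1
    exact h1.symm
  have hrs : r = KlAux.κ x.2 := by
    rw [← hx', hx1, KlAux.E, map_one, one_mul]
  rw [hrs, KlAux.Kl_eq d hd x.2]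
  refine mul_ne_zero (inv_ne_zero KlAux.p_ne_zero_C)
    (mul_ne_zero (pow_ne_zero _ KlAux.p_ne_zero_C) ?_)
  refine KlAux.sum_zeta_pow_ne_zero _ _ ⟨1, ?_⟩ ?_
  · exact Finset.mem_filter.mpr ⟨Finset.mem_univ _, one_pow d⟩
  · calc (Finset.univ.filter (fun b : (ZMod p)ˣ => b ^ d = 1)).card
        ≤ Fintype.card (ZMod p)ˣ := Finset.card_filter_le _ _
    _ = p - 1 := ZMod.card_units p
    _ < p := Nat.sub_lt hp_pos Nat.one_pos
  where hp_pos := (Fact.out (p := p.Prime)).pos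
end

section
/- Let p be an odd prime and let r be a unit modulo p². Then the hyper Kloosterman sum Kl_2(r; p²) is nonzero if and only if r is a quadratic residue modulo p, i.e., the Legendre symbol (r/p) equals 1. -/
open scoped BigOperators

set_option linter.unusedSectionVars false

noncomputable def psi (q : ℕ) (x : ZMod q) : ℂ := e ((x.val : ℂ) / q)

lemma e_add (x y : ℂ) : e (x + y) = e x * e y := by
  simp [e, mul_add, Complex.exp_add]

lemma e_int (n : ℤ) : e n = 1 := by
  rw [e, show 2 * (Real.pi:ℂ) * Complex.I * n = (n:ℂ) * (2*Real.pi*Complex.I) by ring]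
  exact Complex.exp_int_mul_two_pi_mul_I n

lemma e_nat (n : ℕ) : e n = 1 := by exact_mod_cast e_int n

lemma psi_add {q : ℕ} [NeZero q] (x y : ZMod q) : psi q (x + y) = psi q x * psi q y := by
  have hq : (q:ℂ) ≠ 0 := by exact_mod_cast (NeZero.ne q)
  have hv : x.val + y.val = q * ((x.val + y.val)/q) + (x+y).val := by
    rw [ZMod.val_add]; exact (Nat.div_add_mod _ q).symm
  have hc : ((x.val:ℂ)) + (y.val:ℂ)
      = (q:ℂ) * (((x.val + y.val)/q : ℕ):ℂ) + ((x+y).val:ℂ) := by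
    exact_mod_cast congrArg (fun n : ℕ => (n:ℂ)) hv
  rw [psi, psi, psi, ← e_add]
  rw [← add_div, hc, add_div, mul_div_cancel_left₀ _ hq, e_add, e_nat, one_mul]

lemma psi_zero {q : ℕ} [NeZero q] : psi q 0 = 1 := by
  simp [psi, e]

lemma psi_eq_one_iff {q : ℕ} [NeZero q] (x : ZMod q) : psi q x = 1 ↔ x = 0 := by
  constructor
  · intro h
    rw [psi, e, Complex.exp_eq_one_iff] at h
    obtain ⟨n, hn⟩ := h
    have hq : (q:ℂ) ≠ 0 := by exact_mod_cast (NeZero.ne q)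
    have h2 : (2*(Real.pi:ℂ)*Complex.I) ≠ 0 := by
      simp [Real.pi_ne_zero, Complex.I_ne_zero]
    have h3 : ((x.val:ℂ))/q = (n:ℂ) := by
      apply mul_left_cancel₀ h2
      rw [hn]; ring
    have h3' : ((x.val:ℂ)) = (n:ℂ) * q := (div_eq_iff hq).mp h3
    have h5 : (x.val:ℤ) = n * q := by exact_mod_cast h3'
    have hqz : (0:ℤ) < q := by exact_mod_cast Nat.pos_of_ne_zero (NeZero.ne q)
    have hvnn : (0:ℤ) ≤ (x.val:ℤ) := Int.natCast_nonneg _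
    have hvlt : (x.val:ℤ) < q := by exact_mod_cast ZMod.val_lt x
    have hn0 : n = 0 := by
      rcases lt_trichotomy n 0 with h | h | h
      · have : n * (q:ℤ) < 0 := mul_neg_of_neg_of_pos h hqz
        linarith
      · exact h
      · have h1 : (1:ℤ) ≤ n := h
        have : (q:ℤ) ≤ n * q := le_mul_of_one_le_left hqz.le h1
        linarith
    have : x.val = 0 := by
      have : (x.val:ℤ) = 0 := by rw [h5, hn0]; ring
      exact_mod_cast this
    exact (ZMod.val_eq_zero x).mp this
  · rintro rfl; exact psi_zero

lemma psi_pow_nat {q : ℕ} [NeZero q] (x : ZMod q) (n : ℕ) : psi q x ^ n = psi q (n * x) := by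
  induction n with
  | zero => simp [psi_zero]
  | succ k ih =>
    rw [pow_succ, ih, ← psi_add]
    congr 1
    push_cast
    ring

lemma sum_psi_eq_zero {q : ℕ} [NeZero q] (hq : 1 < q) :
    ∑ t : ZMod q, psi q t = 0 := by
  have hq0 : q ≠ 0 := NeZero.ne q
  have key : ∀ t : ZMod q, psi q t = Complex.exp (2 * Real.pi * Complex.I / q) ^ t.val := by
    intro t
    rw [psi, e, ← Complex.exp_nat_mul]
    ring_nf
  calc ∑ t : ZMod q, psi q t
      = ∑ i ∈ Finset.range q, Complex.exp (2 * Real.pi * Complex.I / q) ^ i := by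
        rw [Finset.sum_congr rfl (fun t _ => key t)]
        apply Finset.sum_bij' (fun (t : ZMod q) _ => t.val) (fun (i : ℕ) _ => (i : ZMod q))
        · intro t _; exact Finset.mem_range.mpr (ZMod.val_lt t)
        · intro i hi; exact Finset.mem_univ _
        · intro t _; rw [ZMod.natCast_val, ZMod.cast_id]
        · intro i hi; exact ZMod.val_cast_of_lt (Finset.mem_range.mp hi)
        · intro t _; rfl
    _ = 0 := (Complex.isPrimitiveRoot_exp q hq0).geom_sum_eq_zero hq

lemma sum_psi_mul {p : ℕ} [Fact p.Prime] (c : ZMod p) :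
    ∑ t : ZMod p, psi p (t * c) = if c = 0 then (p:ℂ) else 0 := by
  split_ifs with h
  · subst h
    simp [psi_zero, ZMod.card]
  · rw [show (∑ t : ZMod p, psi p (t * c)) = ∑ t : ZMod p, psi p ((Equiv.mulRight₀ c h) t) from rfl,
      Equiv.sum_comp (Equiv.mulRight₀ c h) (psi p)]
    exact sum_psi_eq_zero (Fact.out : p.Prime).one_lt

section ker
variable (p : ℕ) [Fact p.Prime]

lemma pdvdsq : p ∣ p^2 := ⟨p, sq p⟩

noncomputable def cst : ZMod (p^2) →+* ZMod p := ZMod.castHom (pdvdsq p) (ZMod p)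

variable {p}

lemma cst_apply (x : ZMod (p^2)) : cst p x = (x.val : ZMod p) := by
  rw [cst, ZMod.castHom_apply, ← ZMod.natCast_val]

lemma cst_natCast (n : ℕ) : cst p (n : ZMod (p^2)) = (n : ZMod p) := map_natCast _ n

lemma psq_zero' : ((p : ZMod (p^2)))^2 = 0 := by
  rw [← Nat.cast_pow, ZMod.natCast_self]

lemma ker_exists {x : ZMod (p^2)} (h : cst p x = 0) : ∃ w : ZMod (p^2), x = (p : ZMod (p^2)) * w := by
  rw [cst_apply, ZMod.natCast_eq_zero_iff] at h
  refine ⟨((x.val / p : ℕ) : ZMod (p^2)), ?_⟩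
  rw [← Nat.cast_mul, Nat.mul_div_cancel' h, ZMod.natCast_val, ZMod.cast_id]

lemma ker_mul_p {x : ZMod (p^2)} (h : cst p x = 0) : (p : ZMod (p^2)) * x = 0 := by
  obtain ⟨w, rfl⟩ := ker_exists h
  linear_combination w * psq_zero' (p := p)

lemma ker_sq {x : ZMod (p^2)} (h : cst p x = 0) : x^2 = 0 := by
  obtain ⟨w, rfl⟩ := ker_exists h
  linear_combination (w^2) * psq_zero' (p := p)

lemma p_mul_eq_of_cst_eq {x y : ZMod (p^2)} (h : cst p x = cst p y) :
    (p : ZMod (p^2)) * x = (p : ZMod (p^2)) * y := by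
  have : cst p (x - y) = 0 := by rw [map_sub, h, sub_self]
  have := ker_mul_p this
  linear_combination this

variable (p)

noncomputable def uu (t : ZMod p) : (ZMod (p^2))ˣ where
  val := 1 + (p : ZMod (p^2)) * (t.val : ZMod (p^2))
  inv := 1 - (p : ZMod (p^2)) * (t.val : ZMod (p^2))
  val_inv := by linear_combination (-((t.val : ZMod (p^2))^2)) * psq_zero' (p := p)
  inv_val := by linear_combination (-((t.val : ZMod (p^2))^2)) * psq_zero' (p := p)

variable {p}

lemma uu_val (t : ZMod p) :
    (uu p t : ZMod (p^2)) = 1 + (p : ZMod (p^2)) * (t.val : ZMod (p^2)) := rfl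

lemma uu_inv (t : ZMod p) :
    ((uu p t)⁻¹ : (ZMod (p^2))ˣ) = (1 - (p : ZMod (p^2)) * (t.val : ZMod (p^2)) : ZMod (p^2)) := rfl

lemma cst_T (t : ZMod p) : cst p ((t.val : ZMod (p^2))) = t := by
  rw [cst_natCast, ZMod.natCast_val, ZMod.cast_id]

lemma cst_uu (t : ZMod p) : cst p (uu p t : ZMod (p^2)) = 1 := by
  rw [uu_val, map_add, map_one, map_mul, cst_natCast, ZMod.natCast_self, zero_mul, add_zero]

lemma uu_injective : Function.Injective (uu p) := by
  intro t s h
  have hv : (((p * t.val : ℕ)) : ZMod (p^2)) = ((p * s.val : ℕ) : ZMod (p^2)) := by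
    have := congrArg (fun u : (ZMod (p^2))ˣ => (u : ZMod (p^2))) h
    simp only [uu_val] at this
    push_cast
    linear_combination this
  rw [ZMod.natCast_eq_natCast_iff] at hv
  rw [sq] at hv
  have := Nat.ModEq.mul_left_cancel' (Fact.out : p.Prime).ne_zero hv
  have hts : (t.val : ZMod p) = (s.val : ZMod p) := (ZMod.natCast_eq_natCast_iff _ _ _).mpr this
  rwa [ZMod.natCast_val, ZMod.cast_id, ZMod.natCast_val, ZMod.cast_id] at hts

lemma psi_add' {q : ℕ} [NeZero q] (x y : ZMod q) :
    e (((x.val + y.val : ℕ) : ℂ) / q) = psi q (x + y) := by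
  rw [psi_add, psi, psi, ← e_add, ← add_div, Nat.cast_add]



noncomputable def FF {p : ℕ} [Fact p.Prime] (r a : (ZMod (p^2))ˣ) : ZMod (p^2) :=
  (a : ZMod (p^2)) + ((a⁻¹ * r : (ZMod (p^2))ˣ) : ZMod (p^2))

noncomputable def CC {p : ℕ} [Fact p.Prime] (r a : (ZMod (p^2))ˣ) : ZMod (p^2) :=
  (a : ZMod (p^2)) - ((a⁻¹ * r : (ZMod (p^2))ˣ) : ZMod (p^2))

lemma kl_eq (p : ℕ) [Fact p.Prime] (r : (ZMod (p^2))ˣ) :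
    Kl 2 (p^2) r = ∑ a : (ZMod (p^2))ˣ, psi (p^2) (FF r a) := by
  haveI : NeZero (p^2) := ⟨pow_ne_zero 2 (Fact.out : p.Prime).ne_zero⟩
  rw [Kl, finsum_eq_sum_of_fintype,
    ← Equiv.sum_comp (finTwoArrowEquiv ((ZMod (p^2))ˣ)).symm, Fintype.sum_prod_type]
  refine Finset.sum_congr rfl (fun x _ => ?_)
  simp only [finTwoArrowEquiv_symm_apply, Fin.prod_univ_two, Fin.sum_univ_two,
    Matrix.cons_val_zero, Matrix.cons_val_one, Matrix.head_cons]
  have : ∀ y : (ZMod (p^2))ˣ, (x * y = r) ↔ (y = x⁻¹ * r) := fun y =>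
    eq_inv_mul_iff_mul_eq.symm
  simp_rw [this]
  rw [Finset.sum_ite_eq' Finset.univ (x⁻¹ * r)
    (fun y : (ZMod (p^2))ˣ => e ((((x : ZMod (p^2)).val + (y : ZMod (p^2)).val : ℕ) : ℂ) / (p^2 : ℕ)))]
  rw [if_pos (Finset.mem_univ _)]
  exact psi_add' _ _

section main
variable {p : ℕ} [Fact p.Prime] (r : (ZMod (p^2))ˣ)

lemma FF_mul_uu (a : (ZMod (p^2))ˣ) (t : ZMod p) :
    FF r (a * uu p t) = FF r a + (p : ZMod (p^2)) * (t.val : ZMod (p^2)) * CC r a := by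
  have h1 : ((a * uu p t)⁻¹ * r) = (a⁻¹ * r) * (uu p t)⁻¹ := by
    rw [mul_inv_rev]; exact mul_rotate _ _ _
  rw [FF, FF, CC, h1, Units.val_mul, Units.val_mul, uu_val, uu_inv]
  ring

lemma psi_p_mul (x : ZMod (p^2)) :
    psi (p^2) ((p : ZMod (p^2)) * x) = psi p (cst p x) := by
  haveI : NeZero (p^2) := ⟨pow_ne_zero 2 (Fact.out : p.Prime).ne_zero⟩
  have hp : 1 < p := (Fact.out : p.Prime).one_lt
  have hplt : p < p^2 := by nlinarith
  have hval : ((p : ZMod (p^2)) * x).val = p * (x.val % p) := by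
    rw [ZMod.val_mul, ZMod.val_natCast, Nat.mod_eq_of_lt hplt]
    calc p * x.val % p^2 = p * x.val % (p * p) := congrArg (fun m => p * x.val % m) (pow_two p)
      _ = p * (x.val % p) := Nat.mul_mod_mul_left p x.val p
  have hval2 : (cst p x).val = x.val % p := by
    rw [cst_apply, ZMod.val_natCast]
  rw [psi, psi, hval, hval2]
  have hpc : (p:ℂ) ≠ 0 := by exact_mod_cast (Fact.out : p.Prime).ne_zero
  congr 1
  push_cast
  field_simp

lemma innerSum' (a : (ZMod (p^2))ˣ) :
    ∑ t : ZMod p, psi (p^2) (FF r (a * uu p t))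
      = psi (p^2) (FF r a) * (if cst p (CC r a) = 0 then (p:ℂ) else 0) := by
  haveI : NeZero (p^2) := ⟨pow_ne_zero 2 (Fact.out : p.Prime).ne_zero⟩
  have key : ∀ t : ZMod p, psi (p^2) (FF r (a * uu p t))
      = psi (p^2) (FF r a) * psi p (t * cst p (CC r a)) := by
    intro t
    rw [FF_mul_uu, psi_add, mul_assoc ((p : ZMod (p^2))), psi_p_mul, map_mul, cst_T]
  rw [Finset.sum_congr rfl (fun t _ => key t), ← Finset.mul_sum, sum_psi_mul]

lemma master :
    ∑ a : (ZMod (p^2))ˣ, psi (p^2) (FF r a)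
      = ∑ a ∈ Finset.univ.filter (fun a : (ZMod (p^2))ˣ => cst p (CC r a) = 0),
          psi (p^2) (FF r a) := by
  have hp : (p:ℂ) ≠ 0 := by exact_mod_cast (Fact.out : p.Prime).ne_zero
  apply mul_left_cancel₀ hp
  have lhs : (p:ℂ) * ∑ a : (ZMod (p^2))ˣ, psi (p^2) (FF r a)
      = ∑ t : ZMod p, ∑ a : (ZMod (p^2))ˣ, psi (p^2) (FF r (a * uu p t)) := by
    have : ∀ t : ZMod p, ∑ a : (ZMod (p^2))ˣ, psi (p^2) (FF r (a * uu p t))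
        = ∑ a : (ZMod (p^2))ˣ, psi (p^2) (FF r a) :=
      fun t => Equiv.sum_comp (Equiv.mulRight (uu p t)) (fun a => psi (p^2) (FF r a))
    rw [Finset.sum_congr rfl (fun t _ => this t), Finset.sum_const]
    simp [ZMod.card, mul_comm]
  rw [lhs, Finset.sum_comm]
  rw [Finset.sum_congr rfl (fun a _ => innerSum' r a)]
  rw [Finset.mul_sum]
  rw [Finset.sum_filter]
  refine Finset.sum_congr rfl (fun a _ => ?_)
  split_ifs with h <;> ring


lemma unit_rel (a : (ZMod (p^2))ˣ) : (a : ZMod (p^2)) * ((a⁻¹ : (ZMod (p^2))ˣ) : ZMod (p^2)) = 1 := by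
  rw [← Units.val_mul, mul_inv_cancel]
  exact Units.val_one

lemma CC_zero_iff (a : (ZMod (p^2))ˣ) :
    cst p (CC r a) = 0 ↔ (cst p (a : ZMod (p^2)))^2 = cst p (r : ZMod (p^2)) := by
  have hAB : cst p (a : ZMod (p^2)) * cst p ((a⁻¹ : (ZMod (p^2))ˣ) : ZMod (p^2)) = 1 := by
    rw [← map_mul, unit_rel, map_one]
  rw [CC, map_sub, sub_eq_zero, Units.val_mul, map_mul]
  constructor
  · intro h
    linear_combination (cst p (a : ZMod (p^2))) * h
      + (cst p (r : ZMod (p^2))) * hAB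
  · intro h
    linear_combination (cst p ((a⁻¹ : (ZMod (p^2))ˣ) : ZMod (p^2))) * h
      + (- cst p (a : ZMod (p^2))) * hAB

lemma FF_eq_of_cst_eq (a : (ZMod (p^2))ˣ) (y : ZMod (p^2)) (hy : y^2 = (r : ZMod (p^2)))
    (h : cst p (a : ZMod (p^2)) = cst p y) : FF r a = 2 * y := by
  have hAB := unit_rel a
  have hker : cst p ((a : ZMod (p^2)) - y) = 0 := by rw [map_sub, h, sub_self]
  have hsq := ker_sq hker
  rw [FF, Units.val_mul]
  linear_combination ((a⁻¹ : (ZMod (p^2))ˣ) : ZMod (p^2)) * hsq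
    + (2*y - (a : ZMod (p^2))) * hAB
    + (-((a⁻¹ : (ZMod (p^2))ˣ) : ZMod (p^2))) * hy

lemma card_fiber (u : (ZMod (p^2))ˣ) :
    (Finset.univ.filter fun a : (ZMod (p^2))ˣ =>
      cst p (a : ZMod (p^2)) = cst p (u : ZMod (p^2))).card = p := by
  haveI : NeZero p := ⟨(Fact.out : p.Prime).ne_zero⟩
  have h1 : ∀ (t : ZMod p), t ∈ (Finset.univ : Finset (ZMod p)) →
      u * uu p t ∈ Finset.univ.filter fun a : (ZMod (p^2))ˣ =>
        cst p (a : ZMod (p^2)) = cst p (u : ZMod (p^2)) := by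
    intro t _
    simp only [Finset.mem_filter, Finset.mem_univ, true_and, Units.val_mul, map_mul,
      cst_uu, mul_one]
  have h2 : ∀ (t : ZMod p) (ht : t ∈ (Finset.univ : Finset (ZMod p)))
      (s : ZMod p) (hs : s ∈ (Finset.univ : Finset (ZMod p))),
      u * uu p t = u * uu p s → t = s := by
    intro t _ s _ h
    exact uu_injective (mul_left_cancel h)
  have h3 : ∀ b ∈ Finset.univ.filter fun a : (ZMod (p^2))ˣ =>
      cst p (a : ZMod (p^2)) = cst p (u : ZMod (p^2)),
      ∃ t, ∃ (ht : t ∈ (Finset.univ : Finset (ZMod p))), u * uu p t = b := by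
    intro a ha
    rw [Finset.mem_filter] at ha
    have h := ha.2
    set z : ZMod (p^2) := ((u⁻¹ * a : (ZMod (p^2))ˣ) : ZMod (p^2)) - 1 with hzdef
    have hz : cst p z = 0 := by
      rw [hzdef, map_sub, map_one, Units.val_mul, map_mul, h, ← map_mul, ← Units.val_mul,
        inv_mul_cancel, Units.val_one, map_one, sub_self]
    obtain ⟨w, hw⟩ := ker_exists hz
    refine ⟨cst p w, Finset.mem_univ _, ?_⟩
    apply Units.ext
    have ht : (p : ZMod (p^2)) * (((cst p w).val : ℕ) : ZMod (p^2)) = (p : ZMod (p^2)) * w :=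
      p_mul_eq_of_cst_eq (by rw [cst_T])
    calc ((u * uu p (cst p w) : (ZMod (p^2))ˣ) : ZMod (p^2))
        = (u : ZMod (p^2)) * (1 + (p : ZMod (p^2)) * (((cst p w).val : ℕ) : ZMod (p^2))) := by
          rw [Units.val_mul, uu_val]
      _ = (u : ZMod (p^2)) * (1 + z) := by rw [ht, ← hw]
      _ = (u : ZMod (p^2)) * ((u⁻¹ * a : (ZMod (p^2))ˣ) : ZMod (p^2)) := by
          rw [hzdef]; ring_nf
      _ = ((u * (u⁻¹ * a) : (ZMod (p^2))ˣ) : ZMod (p^2)) := by simp [Units.val_mul]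
      _ = (a : ZMod (p^2)) := by rw [mul_inv_cancel_left]
  have key := Finset.card_bij (fun (t : ZMod p) _ => u * uu p t) h1 h2 h3
  rw [← key, Finset.card_univ, ZMod.card]

lemma twoNeZeroZMod (hodd : Odd p) : (2 : ZMod p) ≠ 0 := by
  intro h
  have : ((2 : ℕ) : ZMod p) = 0 := by exact_mod_cast h
  rw [ZMod.natCast_eq_zero_iff] at this
  have hp2 : p = 2 := ((Nat.prime_dvd_prime_iff_eq (Fact.out : p.Prime) Nat.prime_two).mp this)
  rw [hp2] at hodd
  exact (Nat.not_odd_iff_even.mpr (by decide)) hodd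

lemma hensel (hodd : Odd p) {x : ZMod p} (hx : x ≠ 0)
    (hxx : x * x = cst p (r : ZMod (p^2))) :
    ∃ y : ZMod (p^2), cst p y = x ∧ y^2 = (r : ZMod (p^2)) := by
  set X : ZMod (p^2) := (x.val : ZMod (p^2)) with hXdef
  have hX : cst p X = x := cst_T x
  have hd : cst p (X^2 - (r : ZMod (p^2))) = 0 := by
    rw [map_sub, map_pow, hX, ← hxx, sq, sub_self]
  obtain ⟨w, hw⟩ := ker_exists hd
  have h2x : (2 : ZMod p) * x ≠ 0 := mul_ne_zero (twoNeZeroZMod hodd) hx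
  set s : ZMod p := -(cst p w) * ((2 : ZMod p) * x)⁻¹ with hsdef
  set S : ZMod (p^2) := (s.val : ZMod (p^2)) with hSdef
  have hS : cst p S = s := cst_T s
  refine ⟨X + (p : ZMod (p^2)) * S, ?_, ?_⟩
  · rw [map_add, map_mul, hX, hS, cst_natCast, ZMod.natCast_self, zero_mul, add_zero]
  · have hker : cst p (w + 2 * X * S) = 0 := by
      rw [map_add, map_mul, map_mul, hX, hS]
      have h2 : cst p (2 : ZMod (p^2)) = 2 := map_ofNat _ 2
      rw [h2, hsdef]
      linear_combination (-(cst p w)) * mul_inv_cancel₀ h2x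
    have h1 := ker_mul_p hker
    linear_combination hw + h1 + S^2 * psq_zero' (p := p)


end main

theorem stmt2 (p : ℕ) [Fact p.Prime] (hodd : Odd p) (r : (ZMod (p ^ 2))ˣ) :
    Kl 2 (p ^ 2) r ≠ 0 ↔ legendreSym p ((r : ZMod (p ^ 2)).val : ℤ) = 1 := by
  haveI : NeZero (p^2) := ⟨pow_ne_zero 2 (Fact.out : p.Prime).ne_zero⟩
  have hcast : ((((r : ZMod (p^2)).val : ℤ)) : ZMod p) = cst p (r : ZMod (p^2)) := by
    rw [Int.cast_natCast, cst_apply]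
  have hrunit : IsUnit (cst p (r : ZMod (p^2))) := r.isUnit.map (cst p)
  have hrne : ((((r : ZMod (p^2)).val : ℤ)) : ZMod p) ≠ 0 := by
    rw [hcast]; exact hrunit.ne_zero
  by_cases hsq : IsSquare (cst p (r : ZMod (p^2)))
  · have hleg : legendreSym p ((r : ZMod (p^2)).val : ℤ) = 1 :=
      (legendreSym.eq_one_iff p hrne).mpr (by rw [hcast]; exact hsq)
    refine iff_of_true ?_ hleg
    obtain ⟨x, hx⟩ := hsq
    have hx0 : x ≠ 0 := fun h => hrunit.ne_zero (by rw [hx, h, mul_zero])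
    obtain ⟨y, hcy, hy2⟩ := hensel r hodd hx0 hx.symm
    have hyu : IsUnit y := IsUnit.of_mul_eq_one (a := y) (y * ((r⁻¹ : (ZMod (p^2))ˣ) : ZMod (p^2)))
      (by rw [← mul_assoc, ← sq, hy2, Units.mul_inv])
    set Y := hyu.unit with hYdef
    have hYv : (Y : ZMod (p^2)) = y := hyu.unit_spec
    have hYn : ((-Y : (ZMod (p^2))ˣ) : ZMod (p^2)) = -y := by rw [Units.val_neg, hYv]
    set T₁ := Finset.univ.filter fun a : (ZMod (p^2))ˣ =>
      cst p (a : ZMod (p^2)) = cst p (Y : ZMod (p^2)) with hT1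
    set T₂ := Finset.univ.filter fun a : (ZMod (p^2))ˣ =>
      cst p (a : ZMod (p^2)) = cst p ((-Y : (ZMod (p^2))ˣ) : ZMod (p^2)) with hT2
    have hcYv : cst p (Y : ZMod (p^2)) = x := by rw [hYv, hcy]
    have hcYn : cst p ((-Y : (ZMod (p^2))ˣ) : ZMod (p^2)) = -x := by
      rw [hYn, map_neg, hcy]
    have hset : (Finset.univ.filter fun a : (ZMod (p^2))ˣ => cst p (CC r a) = 0)
        = T₁ ∪ T₂ := by
      ext a
      simp only [hT1, hT2, Finset.mem_filter, Finset.mem_union, Finset.mem_univ, true_and]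
      rw [CC_zero_iff, hcYv, hcYn]
      constructor
      · intro h
        have hfac : (cst p (a : ZMod (p^2)) - x) * (cst p (a : ZMod (p^2)) + x) = 0 := by
          linear_combination h + hx
        rcases mul_eq_zero.mp hfac with h' | h'
        · exact Or.inl (sub_eq_zero.mp h')
        · exact Or.inr (eq_neg_of_add_eq_zero_left h')
      · rintro (h | h)
        · rw [h, sq]; exact hx.symm
        · rw [h, neg_sq, sq]; exact hx.symm
    have hdisj : Disjoint T₁ T₂ := by
      rw [Finset.disjoint_left]
      intro a h1 h2
      rw [hT1, Finset.mem_filter] at h1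
      rw [hT2, Finset.mem_filter] at h2
      have e1 : x = -x := by
        have h3 := h1.2.symm.trans h2.2
        rw [hcYv, hcYn] at h3
        exact h3
      have e2 : (2 : ZMod p) * x = 0 := by linear_combination e1
      exact mul_ne_zero (twoNeZeroZMod hodd) hx0 e2
    rw [kl_eq, master, hset, Finset.sum_union hdisj]
    have hs1 : ∑ a ∈ T₁, psi (p^2) (FF r a) = (p : ℂ) * psi (p^2) (2*y) := by
      rw [Finset.sum_congr rfl (fun a ha => by
        rw [FF_eq_of_cst_eq r a y hy2 (by
          rw [(Finset.mem_filter.mp ha).2, hYv])]),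
        Finset.sum_const, hT1, card_fiber, nsmul_eq_mul]
    have hs2 : ∑ a ∈ T₂, psi (p^2) (FF r a) = (p : ℂ) * psi (p^2) (2*(-y)) := by
      rw [Finset.sum_congr rfl (fun a ha => by
        rw [FF_eq_of_cst_eq r a (-y) (by rw [neg_sq]; exact hy2) (by
          rw [(Finset.mem_filter.mp ha).2, hYn])]),
        Finset.sum_const, hT2, card_fiber, nsmul_eq_mul]
    rw [hs1, hs2]
    set u := psi (p^2) (2*y) with hu
    set v := psi (p^2) (2*(-y)) with hv
    have huv : u * v = 1 := by
      rw [hu, hv, ← psi_add, show (2*y + 2*(-y) : ZMod (p^2)) = 0 by ring, psi_zero]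
    have hpne : (p : ℂ) ≠ 0 := by exact_mod_cast (Fact.out : p.Prime).ne_zero
    suffices h : u + v ≠ 0 by
      intro h0
      apply h
      have h1 : (p:ℂ) * (u + v) = 0 := by linear_combination h0
      rcases mul_eq_zero.mp h1 with h2 | h2
      · exact absurd h2 hpne
      · exact h2
    intro hsum
    have hveq : v = -u := eq_neg_of_add_eq_zero_right hsum
    have hu2 : u^2 = -1 := by
      rw [hveq] at huv; linear_combination -huv
    have h4 : u^2 = psi (p^2) (4*y) := by
      rw [hu, sq, ← psi_add]
      congr 1
      ring
    have h8 : psi (p^2) (8*y) = 1 := by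
      have : psi (p^2) (8*y) = psi (p^2) (4*y) * psi (p^2) (4*y) := by
        rw [← psi_add]
        congr 1
        ring
      rw [this, ← h4, hu2]; ring
    have hy8 : (8 : ZMod (p^2)) * y = 0 := (psi_eq_one_iff _).mp h8
    have h80 : ((8:ℕ) : ZMod (p^2)) = 0 := by
      have : ((8:ℕ) : ZMod (p^2)) = ((8 : ZMod (p^2)) * y) * ((Y⁻¹ : (ZMod (p^2))ˣ) : ZMod (p^2)) := by
        rw [mul_assoc, ← hYv, Units.mul_inv, mul_one]
        norm_num
      rw [this, hy8, zero_mul]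
    rw [ZMod.natCast_eq_zero_iff] at h80
    have hdvd : p ∣ 8 := dvd_trans (pdvdsq p) h80
    have hdvd2 : p ∣ 2 := (Fact.out : p.Prime).dvd_of_dvd_pow
      (show p ∣ 2^3 by norm_num; exact hdvd)
    have hp2 : p = 2 := (Nat.prime_dvd_prime_iff_eq (Fact.out : p.Prime) Nat.prime_two).mp hdvd2
    rw [hp2] at hodd
    exact (by decide : ¬ Odd 2) hodd
  · have hempty : (Finset.univ.filter fun a : (ZMod (p^2))ˣ => cst p (CC r a) = 0) = ∅ := by
      rw [Finset.filter_eq_empty_iff]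
      intro a _
      intro h
      exact hsq ⟨cst p (a : ZMod (p^2)), by
        rw [← (CC_zero_iff r a).mp h, sq]⟩
    have hzero : Kl 2 (p^2) r = 0 := by
      rw [kl_eq, master, hempty, Finset.sum_empty]
    refine iff_of_false (fun h => h hzero) (fun hleg => hsq ?_)
    have := (legendreSym.eq_one_iff p hrne).mp hleg
    rwa [hcast] at this
end ker
end

section
/- Let p be an odd prime, let d ≥ 1 be an integer, and let a be a unit modulo p² with a ≡ 1 (mod p). Then Σ_φ φ(a) · τ(φ)^d ≠ 0, where the sum runs over all Dirichlet characters φ modulo p². -/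
open scoped BigOperators

/-- Gauss sum of a Dirichlet character mod `M`: `τ(φ) = Σ_{a mod M} φ(a) e(a/M)`. -/
noncomputable def tau {M : ℕ} (φ : DirichletCharacter ℂ M) : ℂ :=
  ∑ᶠ a : ZMod M, φ a * e ((a.val : ℂ) / M)

set_option linter.unusedSectionVars false

private lemma hom_map_sum {A N ι : Type*} [AddCommMonoid A] [CommMonoid N]
    (f : A → N) (h0 : f 0 = 1) (hadd : ∀ x y, f (x + y) = f x * f y)
    (t : Finset ι) (g : ι → A) : f (∑ i ∈ t, g i) = ∏ i ∈ t, f (g i) := by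
  classical
  induction t using Finset.cons_induction with
  | empty => simpa using h0
  | cons i t hi ih => rw [Finset.sum_cons, Finset.prod_cons, hadd, ih]

private lemma sum_units_eq {β : Type*} [AddCommMonoid β] {Mo : Type*} [Monoid Mo] [Fintype Mo]
    [DecidableEq Mo] (g : Mo → β) (h : ∀ x, ¬IsUnit x → g x = 0) :
    ∑ x : Mo, g x = ∑ u : Moˣ, g ↑u := by
  have h1 : ∑ u : Moˣ, g ↑u = ∑ x ∈ Finset.univ.image (fun u : Moˣ => (u : Mo)), g x :=
    (Finset.sum_image (by intro x _ y _ hxy; exact Units.ext hxy)).symm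
  have h2 : Finset.univ.image (fun u : Moˣ => (u : Mo)) = Finset.univ.filter IsUnit := by
    ext x
    simp only [Finset.mem_image, Finset.mem_univ, true_and, Finset.mem_filter]
    exact ⟨fun ⟨u, hu⟩ => hu ▸ u.isUnit, fun hx => ⟨hx.unit, rfl⟩⟩
  rw [h1, h2, Finset.sum_filter_of_ne]
  intro x _ hx
  by_contra hu
  exact hx (h x hu)

private lemma prod_ite_all {d : ℕ} (P : Fin d → Prop) [DecidablePred P] (c : ℂ) :
    (∏ i, if P i then c else 0) = if ∀ i, P i then c ^ d else 0 := by
  by_cases h : ∀ i, P i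
  · simp [h, Finset.prod_const, Finset.card_univ]
  · rw [if_neg h]
    push_neg at h
    obtain ⟨i, hi⟩ := h
    exact Finset.prod_eq_zero (Finset.mem_univ i) (if_neg hi)

private lemma sum_tuple_const {β : Type*} [AddCommMonoid β] {T : Type*} [Fintype T]
    [DecidableEq T] {D : ℕ} (E : (Fin (D + 1) → T) → β) :
    ∑ u : Fin (D + 1) → T, (if ∀ i, u i = u 0 then E u else 0) = ∑ v : T, E (fun _ => v) := by
  classical
  rw [Finset.sum_ite, Finset.sum_const_zero, add_zero]
  refine Finset.sum_nbij' (fun u => u 0) (fun v _ => v) ?_ ?_ ?_ ?_ ?_ <;>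
    intros <;> try simp_all
  case refine_3 u hu =>
    funext i; exact (hu i).symm
  case refine_5 u hu =>
    congr 1
    funext i; exact hu i

private lemma sum_zeta_pow_ne_zero {p : ℕ} [hp : Fact p.Prime] {ζ : ℂ}
    (hζ : IsPrimitiveRoot ζ (p ^ 2)) {α : Type*} (s : Finset α) (m : α → ℕ)
    (h0 : s.Nonempty) (hcard : s.card < p) : ∑ v ∈ s, ζ ^ m v ≠ 0 := by
  intro h
  have hppos : 0 < p ^ 2 := pow_pos hp.out.pos 2
  have hint : IsIntegral ℤ ζ := hζ.isIntegral hppos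
  set P : Polynomial ℤ := ∑ v ∈ s, Polynomial.X ^ m v with hP
  have hPz : (Polynomial.aeval ζ) P = 0 := by
    simp only [hP, map_sum, map_pow, Polynomial.aeval_X]
    exact h
  have hdvd : minpoly ℤ ζ ∣ P := minpoly.isIntegrallyClosed_dvd hint hPz
  rw [← Polynomial.cyclotomic_eq_minpoly hζ hppos] at hdvd
  obtain ⟨Q, hQ⟩ := hdvd
  have h1 : P.eval 1 = (s.card : ℤ) := by
    simp [hP, Polynomial.eval_finset_sum]
  have h2 : P.eval 1 = (p : ℤ) * Q.eval 1 := by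
    rw [hQ, Polynomial.eval_mul, show (2 : ℕ) = 1 + 1 from rfl,
      Polynomial.eval_one_cyclotomic_prime_pow]
  have hdvd2 : (p : ℤ) ∣ (s.card : ℤ) := ⟨Q.eval 1, by rw [← h1, h2]⟩
  have hdvd3 : p ∣ s.card := Int.ofNat_dvd.mp hdvd2
  have := Nat.le_of_dvd (Finset.card_pos.mpr h0) hdvd3
  omega

section
variable {p : ℕ} [hp : Fact p.Prime]

private lemma hom_map_sum' {A N ι : Type*} [AddCommMonoid A] [CommMonoid N]
    (f : A → N) (h0 : f 0 = 1) (hadd : ∀ x y, f (x + y) = f x * f y)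
    (t : Finset ι) (g : ι → A) : f (∑ i ∈ t, g i) = ∏ i ∈ t, f (g i) := by
  classical
  induction t using Finset.cons_induction with
  | empty => simpa using h0
  | cons i t hi ih => rw [Finset.sum_cons, Finset.prod_cons, hadd, ih]

private lemma prod_ite_all' {d : ℕ} (P : Fin d → Prop) [DecidablePred P] (c : ℂ) :
    (∏ i, if P i then c else 0) = if ∀ i, P i then c ^ d else 0 := by
  by_cases h : ∀ i, P i
  · simp [h, Finset.prod_const, Finset.card_univ]
  · rw [if_neg h]
    push_neg at h
    obtain ⟨i, hi⟩ := h
    exact Finset.prod_eq_zero (Finset.mem_univ i) (if_neg hi)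

private lemma inner_sum_aux {D : ℕ} (c : Fin (D + 1) → ZMod p) (s : ZMod p) :
    ∑ k : Fin (D + 1) → ZMod p,
        (if ∑ i, k i = s then ZMod.stdAddChar (∑ i, c i * k i) else 0)
      = if ∀ i, c i = c 0 then (p : ℂ) ^ D * ZMod.stdAddChar (c 0 * s) else 0 := by
  classical
  set ψ1 : AddChar (ZMod p) ℂ := ZMod.stdAddChar with hψ1def
  have hprim := ZMod.isPrimitive_stdAddChar p
  have hpc : (p : ℂ) ≠ 0 := Nat.cast_ne_zero.mpr hp.out.ne_zero
  have hmapsum : ∀ {ι : Type} (t : Finset ι) (g : ι → ZMod p),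
      ψ1 (∑ i ∈ t, g i) = ∏ i ∈ t, ψ1 (g i) :=
    fun t g => hom_map_sum' ψ1 ψ1.map_zero_eq_one (fun x y => ψ1.map_add_eq_mul x y) t g
  have hshift : ∀ b : ZMod p, ∑ j : ZMod p, ψ1 (j * b) = if b = 0 then (p : ℂ) else 0 := by
    intro b
    rw [hψ1def, AddChar.sum_mulShift b hprim]
    simp [ZMod.card]
  have step1 : ∀ k : Fin (D + 1) → ZMod p,
      (if ∑ i, k i = s then ψ1 (∑ i, c i * k i) else 0)
        = (p : ℂ)⁻¹ * ∑ j : ZMod p, ψ1 (∑ i, c i * k i) * ψ1 (j * (∑ i, k i - s)) := by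
    intro k
    rw [← Finset.mul_sum, hshift (∑ i, k i - s)]
    by_cases h : ∑ i, k i = s
    · rw [if_pos h, if_pos (by rw [h, sub_self])]
      field_simp
    · rw [if_neg h, if_neg (fun hh => h (by linear_combination hh)), mul_zero, mul_zero]
  rw [Finset.sum_congr rfl (fun k _ => step1 k), ← Finset.mul_sum]
  rw [Finset.sum_comm]
  have key : ∀ (j : ZMod p) (k : Fin (D + 1) → ZMod p),
      ψ1 (∑ i, c i * k i) * ψ1 (j * (∑ i, k i - s))
        = ψ1 (-(j * s)) * ∏ i, ψ1 ((c i + j) * k i) := by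
    intro j k
    rw [← hmapsum Finset.univ (fun i => (c i + j) * k i), ← AddChar.map_add_eq_mul,
      ← AddChar.map_add_eq_mul]
    congr 1
    have hsum : ∑ i, (c i + j) * k i = ∑ i, c i * k i + j * ∑ i, k i := by
      rw [Finset.mul_sum, ← Finset.sum_add_distrib]
      exact Finset.sum_congr rfl fun i _ => by ring
    rw [hsum]; ring
  have step2 : ∀ j : ZMod p,
      ∑ k : Fin (D + 1) → ZMod p, ψ1 (∑ i, c i * k i) * ψ1 (j * (∑ i, k i - s))
        = ψ1 (-(j * s)) * (if ∀ i, c i + j = 0 then (p : ℂ) ^ (D + 1) else 0) := by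
    intro j
    rw [Finset.sum_congr rfl (fun k _ => key j k), ← Finset.mul_sum]
    congr 1
    rw [← prod_ite_all' (fun i => c i + j = 0) (p : ℂ)]
    rw [← Fintype.prod_sum (fun i (t : ZMod p) => ψ1 ((c i + j) * t))]
    refine Finset.prod_congr rfl fun i _ => ?_
    rw [← hshift (c i + j)]
    exact Finset.sum_congr rfl fun t _ => by rw [mul_comm]
  rw [Finset.sum_congr rfl (fun j _ => step2 j)]
  by_cases hall : ∀ i, c i = c 0
  · rw [if_pos hall]
    have hcond : ∀ j : ZMod p, (∀ i, c i + j = 0) ↔ j = -(c 0) := by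
      intro j
      constructor
      · intro h; have := h 0; linear_combination this
      · intro h i; rw [hall i, h]; ring
    have : ∀ j : ZMod p,
        ψ1 (-(j * s)) * (if ∀ i, c i + j = 0 then (p : ℂ) ^ (D + 1) else 0)
          = if j = -(c 0) then ψ1 (-(j * s)) * (p : ℂ) ^ (D + 1) else 0 := by
      intro j
      by_cases h : j = -(c 0)
      · rw [if_pos h, if_pos ((hcond j).mpr h)]
      · rw [if_neg h, if_neg (fun hh => h ((hcond j).mp hh)), mul_zero]
    rw [Finset.sum_congr rfl (fun j _ => this j), Finset.sum_ite_eq' Finset.univ (-(c 0))]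
    rw [if_pos (Finset.mem_univ _)]
    have : -(-(c 0) * s) = c 0 * s := by ring
    rw [this, pow_succ]
    field_simp
  · rw [if_neg hall]
    have hz : ∀ j : ZMod p,
        ψ1 (-(j * s)) * (if ∀ i, c i + j = 0 then (p : ℂ) ^ (D + 1) else 0) = 0 := by
      intro j
      have hnot : ¬(∀ i, c i + j = 0) := by
        intro h
        exact hall fun i => by have h1 := h i; have h2 := h 0; linear_combination h1 - h2
      rw [if_neg hnot, mul_zero]
    rw [Finset.sum_congr rfl (fun j _ => hz j), Finset.sum_const_zero, mul_zero]
end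

section
variable {p : ℕ} [hp : Fact p.Prime]

private def pi0 (p : ℕ) : ZMod (p ^ 2) →+* ZMod p :=
  ZMod.castHom (dvd_pow_self p (by norm_num : (2 : ℕ) ≠ 0)) (ZMod p)

private lemma pp_zero : (p : ZMod (p ^ 2)) * (p : ZMod (p ^ 2)) = 0 := by
  have h : ((p ^ 2 : ℕ) : ZMod (p ^ 2)) = 0 := ZMod.natCast_self _
  push_cast at h
  linear_combination h

private lemma natcast_mod_p (c : ℕ) :
    ((p * (c % p) : ℕ) : ZMod (p ^ 2)) = ((p * c : ℕ) : ZMod (p ^ 2)) := by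
  conv_rhs => rw [← Nat.div_add_mod c p]
  have h : ((p : ZMod (p ^ 2))) ^ 2 = 0 := by
    have h2 := ZMod.natCast_self (p ^ 2)
    push_cast at h2
    linear_combination h2
  push_cast
  linear_combination (-((c / p : ℕ) : ZMod (p ^ 2))) * h

private def iotaval (p : ℕ) (k : ZMod p) : ZMod (p ^ 2) :=
  1 + (p : ZMod (p ^ 2)) * ((k.val : ℕ) : ZMod (p ^ 2))

private lemma iotaval_zero : iotaval p (0 : ZMod p) = 1 := by
  haveI : NeZero p := ⟨hp.out.ne_zero⟩
  simp [iotaval, ZMod.val_zero]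

private lemma iotaval_add (k l : ZMod p) :
    iotaval p (k + l) = iotaval p k * iotaval p l := by
  haveI : NeZero p := ⟨hp.out.ne_zero⟩
  unfold iotaval
  have hval : (k + l).val = (k.val + l.val) % p := ZMod.val_add k l
  have h1 : ((p * ((k.val + l.val) % p) : ℕ) : ZMod (p ^ 2))
      = ((p * (k.val + l.val) : ℕ) : ZMod (p ^ 2)) := natcast_mod_p _
  have h2 : (p : ZMod (p ^ 2)) * (((k + l).val : ℕ) : ZMod (p ^ 2))
      = (p : ZMod (p ^ 2)) * ((k.val : ℕ) : ZMod (p ^ 2))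
        + (p : ZMod (p ^ 2)) * ((l.val : ℕ) : ZMod (p ^ 2)) := by
    rw [hval]
    push_cast at h1 ⊢
    linear_combination h1
  rw [h2]
  have hpp := pp_zero (p := p)
  linear_combination (-((k.val : ZMod (p ^ 2)) * (l.val : ZMod (p ^ 2)))) * hpp

private def iota (p : ℕ) [hp : Fact p.Prime] (k : ZMod p) : (ZMod (p ^ 2))ˣ :=
  Units.mkOfMulEqOne (iotaval p k) (iotaval p (-k))
    (by rw [← iotaval_add, add_neg_cancel, iotaval_zero])

private lemma iota_coe (k : ZMod p) : ((iota p k : (ZMod (p ^ 2))ˣ) : ZMod (p ^ 2)) = iotaval p k := rfl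

private lemma iota_add (k l : ZMod p) : iota p (k + l) = iota p k * iota p l :=
  Units.ext (by rw [Units.val_mul, iota_coe, iota_coe, iota_coe, iotaval_add])

private lemma iota_zero : iota p (0 : ZMod p) = 1 :=
  Units.ext (by rw [iota_coe, iotaval_zero, Units.val_one])

private lemma iota_nsmul (k : ZMod p) (n : ℕ) : iota p (n • k) = (iota p k) ^ n := by
  induction n with
  | zero => simpa using iota_zero
  | succ n ih =>
    rw [succ_nsmul, iota_add, ih]
    exact (pow_succ _ _).symm

private lemma iota_pow_p (k : ZMod p) : (iota p k) ^ p = 1 := by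
  rw [← iota_nsmul]
  have : p • k = 0 := by
    rw [nsmul_eq_mul, ZMod.natCast_self, zero_mul]
  rw [this, iota_zero]

private lemma iota_inj : Function.Injective (iota p) := by
  haveI : NeZero p := ⟨hp.out.ne_zero⟩
  intro k l h
  have h' : iotaval p k = iotaval p l := congrArg Units.val h
  unfold iotaval at h'
  have h2 : ((p * k.val : ℕ) : ZMod (p ^ 2)) = ((p * l.val : ℕ) : ZMod (p ^ 2)) := by
    push_cast
    linear_combination h'
  have hk : p * k.val < p ^ 2 := by
    have := ZMod.val_lt k
    have := hp.out.pos
    nlinarith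
  have hl : p * l.val < p ^ 2 := by
    have := ZMod.val_lt l
    have := hp.out.pos
    nlinarith
  have h3 : p * k.val = p * l.val := by
    have := congrArg ZMod.val h2
    rwa [ZMod.val_cast_of_lt hk, ZMod.val_cast_of_lt hl] at this
  have h4 : k.val = l.val := Nat.eq_of_mul_eq_mul_left hp.out.pos h3
  exact ZMod.val_injective _ h4

private lemma tors_eq_one {x : (ZMod (p ^ 2))ˣ} (h1 : x ^ (p - 1) = 1) (h2 : x ^ p = 1) :
    x = 1 := by
  have hx : x ^ p = x ^ (p - 1) * x := by
    rw [← pow_succ]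
    congr 1
    have := hp.out.pos
    omega
  rw [h2, h1, one_mul] at hx
  exact hx.symm

private lemma exists_iota {g : (ZMod (p ^ 2))ˣ} (hg : pi0 p (g : ZMod (p ^ 2)) = 1) :
    ∃ k : ZMod p, g = iota p k := by
  haveI : NeZero p := ⟨hp.out.ne_zero⟩
  haveI : NeZero (p ^ 2) := ⟨pow_ne_zero 2 hp.out.ne_zero⟩
  set w : ZMod (p ^ 2) := (g : ZMod (p ^ 2)) - 1 with hw
  have hw0 : pi0 p w = 0 := by rw [hw, map_sub, hg, map_one, sub_self]
  have hwv : ((w.val : ℕ) : ZMod p) = 0 := by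
    have : pi0 p w = ((w.val : ℕ) : ZMod p) := by
      rw [pi0, ZMod.castHom_apply, ← ZMod.natCast_val]
    rwa [this] at hw0
  have hdvd : p ∣ w.val := (ZMod.natCast_eq_zero_iff _ _).mp hwv
  obtain ⟨c, hc⟩ := hdvd
  have hclt : c < p := by
    have h1 : w.val < p ^ 2 := ZMod.val_lt w
    have := hp.out.pos
    nlinarith [hc ▸ h1]
  refine ⟨(c : ZMod p), Units.ext ?_⟩
  rw [iota_coe]
  unfold iotaval
  rw [ZMod.val_cast_of_lt hclt]
  have hwcast : ((w.val : ℕ) : ZMod (p ^ 2)) = w := by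
    rw [ZMod.natCast_val, ZMod.cast_id]
  have : (g : ZMod (p ^ 2)) = 1 + w := by rw [hw]; ring
  rw [this, ← hwcast, hc]
  push_cast
  ring

end
section
variable {p : ℕ} [hp : Fact p.Prime]

private lemma pi0_inj_tors {v w : (ZMod (p ^ 2))ˣ} (hv : v ^ (p - 1) = 1)
    (hw : w ^ (p - 1) = 1)
    (hvw : pi0 p (v : ZMod (p ^ 2)) = pi0 p (w : ZMod (p ^ 2))) : v = w := by
  have hx1 : (v * w⁻¹) ^ (p - 1) = 1 := by
    rw [mul_pow, hv, inv_pow, hw, inv_one, one_mul]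
  have hπ : pi0 p ((v * w⁻¹ : (ZMod (p ^ 2))ˣ) : ZMod (p ^ 2)) = 1 := by
    have h1 : pi0 p ((w : ZMod (p ^ 2)) * ((w⁻¹ : (ZMod (p ^ 2))ˣ) : ZMod (p ^ 2))) = 1 := by
      rw [Units.mul_inv, map_one]
    rw [map_mul] at h1
    rw [Units.val_mul, map_mul, hvw, h1]
  obtain ⟨k, hk⟩ := exists_iota hπ
  have h1 : v * w⁻¹ = 1 := by
    rw [hk]
    exact tors_eq_one (hk ▸ hx1) (iota_pow_p k)
  exact mul_inv_eq_one.mp h1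

private lemma exp_group (g : (ZMod (p ^ 2))ˣ) : g ^ (p * (p - 1)) = 1 := by
  haveI : NeZero (p ^ 2) := ⟨pow_ne_zero 2 hp.out.ne_zero⟩
  have hcard : Fintype.card (ZMod (p ^ 2))ˣ = p * (p - 1) := by
    rw [ZMod.card_units_eq_totient, Nat.totient_prime_pow hp.out (by norm_num : 0 < 2)]
    norm_num
  rw [← hcard]
  exact pow_card_eq_one

private lemma m_bijective :
    Function.Bijective (fun x : {v : (ZMod (p ^ 2))ˣ // v ^ (p - 1) = 1} × ZMod p =>
      (x.1 : (ZMod (p ^ 2))ˣ) * iota p x.2) := by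
  constructor
  · rintro ⟨⟨v, hv⟩, k⟩ ⟨⟨w, hw⟩, l⟩ h
    simp only at h
    have e1 : iota p l = iota p (l - k) * iota p k := by rw [← iota_add, sub_add_cancel]
    rw [e1, ← mul_assoc] at h
    have h2 : v = w * iota p (l - k) := mul_right_cancel h
    have hx : v * w⁻¹ = iota p (l - k) := by
      rw [h2, mul_comm w _, mul_assoc, mul_inv_cancel, mul_one]
    have hxp1 : (iota p (l - k)) ^ (p - 1) = 1 := by
      rw [← hx, mul_pow, hv, inv_pow, hw, inv_one, one_mul]
    have hone : iota p (l - k) = 1 := tors_eq_one hxp1 (iota_pow_p _)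
    have hkl : l - k = 0 := iota_inj (by rw [hone, iota_zero])
    have hkl' : k = l := by linear_combination -hkl
    have hvw : v = w := by rw [h2, hone, mul_one]
    subst hkl' hvw
    rfl
  · intro g
    haveI : NeZero p := ⟨hp.out.ne_zero⟩
    have h1 : (g ^ p) ^ (p - 1) = 1 := by rw [← pow_mul]; exact exp_group g
    set h : (ZMod (p ^ 2))ˣ := g * (g ^ p)⁻¹ with hh
    have hgpp : g ^ (p * p) = g ^ p := by
      have h0 : 1 + (p - 1) = p := by have := hp.out.pos; omega
      have hsplit : p * p = p + p * (p - 1) := by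
        calc p * p = p * (1 + (p - 1)) := by rw [h0]
        _ = p + p * (p - 1) := by ring
      rw [hsplit, pow_add, exp_group, mul_one]
    have hhp : h ^ p = 1 := by
      rw [hh, mul_pow, inv_pow, ← pow_mul, hgpp, mul_inv_cancel]
    have hπ1 : pi0 p ((h : (ZMod (p ^ 2))ˣ) : ZMod (p ^ 2)) = 1 := by
      set x := pi0 p ((h : (ZMod (p ^ 2))ˣ) : ZMod (p ^ 2)) with hx
      have hxp : x ^ p = 1 := by
        rw [hx, ← map_pow, ← Units.val_pow_eq_pow_val, hhp, Units.val_one, map_one]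
      have hfermat := ZMod.pow_card x
      rw [hxp] at hfermat
      exact hfermat.symm
    obtain ⟨k, hk⟩ := exists_iota hπ1
    refine ⟨⟨⟨g ^ p, h1⟩, k⟩, ?_⟩
    simp only
    rw [← hk, hh, mul_comm g _, ← mul_assoc, mul_inv_cancel, one_mul]

end

theorem stmt5 (p : ℕ) [Fact p.Prime] (hodd : Odd p) (d : ℕ) (hd : 1 ≤ d)
    (a : (ZMod (p ^ 2))ˣ)
    (ha : ZMod.castHom (dvd_pow_self p (by norm_num : (2 : ℕ) ≠ 0)) (ZMod p)
        (a : ZMod (p ^ 2)) = 1) :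
    (∑ᶠ φ : DirichletCharacter ℂ (p ^ 2), φ (a : ZMod (p ^ 2)) * tau φ ^ d) ≠ 0 := by
  classical
  have hp : p.Prime := Fact.out
  haveI : NeZero p := ⟨hp.ne_zero⟩
  haveI : NeZero (p ^ 2) := ⟨pow_ne_zero 2 hp.ne_zero⟩
  haveI : Fact (1 < p) := ⟨hp.one_lt⟩
  obtain ⟨D, rfl⟩ : ∃ D, d = D + 1 := ⟨d - 1, by omega⟩
  set ψ : AddChar (ZMod (p ^ 2)) ℂ := ZMod.stdAddChar with hψdef
  set ψ1 : AddChar (ZMod p) ℂ := ZMod.stdAddChar with hψ1def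
  set ζ : ℂ := Complex.exp (2 * Real.pi * Complex.I / ((p ^ 2 : ℕ) : ℂ)) with hζdef
  have hζ : IsPrimitiveRoot ζ (p ^ 2) := Complex.isPrimitiveRoot_exp _ (NeZero.ne _)
  have hpC : (p : ℂ) ≠ 0 := Nat.cast_ne_zero.mpr hp.ne_zero
  -- identification of `e` with the standard additive character
  have he : ∀ x : ZMod (p ^ 2), e ((x.val : ℂ) / ((p ^ 2 : ℕ) : ℂ)) = ψ x := by
    intro x
    rw [hψdef, ZMod.stdAddChar_apply, ZMod.toCircle_apply, e]
    push_cast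
    ring_nf
  have hψζ : ∀ x : ZMod (p ^ 2), ψ x = ζ ^ x.val := by
    intro x
    rw [hψdef, ZMod.stdAddChar_apply, ZMod.toCircle_apply, hζdef, ← Complex.exp_nat_mul]
    push_cast
    ring_nf
  have hψ1ζ : ∀ x : ZMod p, ψ1 x = ζ ^ (p * x.val) := by
    intro x
    rw [hψ1def, ZMod.stdAddChar_apply, ZMod.toCircle_apply, hζdef, ← Complex.exp_nat_mul]
    congr 1
    push_cast
    field_simp
  have hψp : ∀ W : ZMod (p ^ 2), ψ ((p : ZMod (p ^ 2)) * W) = ψ1 (pi0 p W) := by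
    intro W
    have h1 : (p : ZMod (p ^ 2)) * W = (((p * W.val : ℕ) : ℤ) : ZMod (p ^ 2)) := by
      push_cast [ZMod.natCast_val, ZMod.cast_id]
      ring
    have h2 : pi0 p W = (((W.val : ℕ) : ℤ) : ZMod p) := by
      rw [pi0, ZMod.castHom_apply, ← ZMod.natCast_val]
      push_cast
      ring
    rw [h1, h2, hψdef, hψ1def, ZMod.stdAddChar_coe, ZMod.stdAddChar_coe]
    congr 1
    push_cast
    field_simp
  -- the torsion subgroup
  have htau : ∀ φ : DirichletCharacter ℂ (p ^ 2),
      tau φ = ∑ u : (ZMod (p ^ 2))ˣ, φ ↑u * ψ ↑u := by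
    intro φ
    rw [tau, finsum_eq_sum_of_fintype]
    rw [Finset.sum_congr rfl (fun x _ => by rw [he x])]
    exact sum_units_eq _ (fun x hx => by rw [MulChar.map_nonunit φ hx, zero_mul])
  set r : (ZMod (p ^ 2))ˣ := a⁻¹ with hr
  have hπa : pi0 p ((a : ZMod (p ^ 2))) = 1 := ha
  have hπr : pi0 p ((r : ZMod (p ^ 2))) = 1 := by
    have h1 : pi0 p ((a : ZMod (p ^ 2)) * ((a⁻¹ : (ZMod (p ^ 2))ˣ) : ZMod (p ^ 2))) = 1 := by
      rw [Units.mul_inv, map_one]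
    rw [map_mul, hπa, one_mul] at h1
    exact h1
  obtain ⟨s, hs⟩ := exists_iota hπr
  rw [finsum_eq_sum_of_fintype]
  have stepA : ∑ φ : DirichletCharacter ℂ (p ^ 2), φ ↑a * tau φ ^ (D + 1)
      = ((p ^ 2).totient : ℂ) *
        ∑ n : Fin (D + 1) → (ZMod (p ^ 2))ˣ,
          (if ∏ i, n i = r then ∏ i, ψ ↑(n i) else 0) := by
    have e1 : ∀ φ : DirichletCharacter ℂ (p ^ 2),
        φ ↑a * tau φ ^ (D + 1)
          = ∑ n : Fin (D + 1) → (ZMod (p ^ 2))ˣ,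
              φ ((a * ∏ i, n i : (ZMod (p ^ 2))ˣ) : ZMod (p ^ 2)) * ∏ i, ψ ↑(n i) := by
      intro φ
      rw [htau φ, Fintype.sum_pow, Finset.mul_sum]
      refine Finset.sum_congr rfl fun n _ => ?_
      have hcoe : ((∏ i, n i : (ZMod (p ^ 2))ˣ) : ZMod (p ^ 2))
          = ∏ i, ((n i : (ZMod (p ^ 2))ˣ) : ZMod (p ^ 2)) :=
        map_prod (Units.coeHom (ZMod (p ^ 2))) _ _
      rw [Finset.prod_mul_distrib, Units.val_mul, map_mul, hcoe, map_prod]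
      ring
    rw [Finset.sum_congr rfl fun φ _ => e1 φ, Finset.sum_comm]
    rw [Finset.mul_sum]
    refine Finset.sum_congr rfl fun n _ => ?_
    rw [← Finset.sum_mul, DirichletCharacter.sum_characters_eq]
    have hcond : (((a * ∏ i, n i : (ZMod (p ^ 2))ˣ) : ZMod (p ^ 2)) = 1) ↔ (∏ i, n i = r) := by
      constructor
      · intro h
        have h' : a * ∏ i, n i = 1 := Units.ext (by rw [h, Units.val_one])
        rw [hr]
        exact (inv_eq_of_mul_eq_one_right h').symm
      · intro h
        rw [h, hr, mul_inv_cancel, Units.val_one]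
    by_cases h : ∏ i, n i = r
    · rw [if_pos (hcond.mpr h), if_pos h]
    · rw [if_neg (fun hh => h (hcond.mp hh)), if_neg h, zero_mul, mul_zero]
  rw [stepA]
  apply mul_ne_zero
  · exact Nat.cast_ne_zero.mpr (Nat.totient_pos.mpr (pow_pos hp.pos 2)).ne'
  -- Step B : evaluation of the Kloosterman-type sum
  have hKe : ∑ n : Fin (D + 1) → (ZMod (p ^ 2))ˣ, (if ∏ i, n i = r then ∏ i, ψ ↑(n i) else 0)
      = ∑ u : Fin (D + 1) → {v : (ZMod (p ^ 2))ˣ // v ^ (p - 1) = 1},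
          ∑ k : Fin (D + 1) → ZMod p,
          (if ∏ i, ((u i : (ZMod (p ^ 2))ˣ) * iota p (k i)) = r
            then ∏ i, ψ ↑((u i : (ZMod (p ^ 2))ˣ) * iota p (k i)) else 0) := by
    let E2 : ((Fin (D + 1) → {v : (ZMod (p ^ 2))ˣ // v ^ (p - 1) = 1}) × (Fin (D + 1) → ZMod p))
        ≃ (Fin (D + 1) → (ZMod (p ^ 2))ˣ) :=
      (Equiv.arrowProdEquivProdArrow _ _ _).symm.trans
        (Equiv.arrowCongr (Equiv.refl (Fin (D + 1)))
          (Equiv.ofBijective _ (m_bijective (p := p))))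
    have heq := Fintype.sum_equiv E2
      (fun y => if (∏ i, ((y.1 i : (ZMod (p ^ 2))ˣ) * iota p (y.2 i))) = r
          then ∏ i, ψ ↑((y.1 i : (ZMod (p ^ 2))ˣ) * iota p (y.2 i)) else 0)
      (fun n => if (∏ i, n i) = r then ∏ i, ψ ↑(n i) else 0)
      (fun y => rfl)
    rw [← heq, Fintype.sum_prod_type]
  have hinner : ∀ u : Fin (D + 1) → {v : (ZMod (p ^ 2))ˣ // v ^ (p - 1) = 1},
      ∑ k : Fin (D + 1) → ZMod p,
        (if ∏ i, ((u i : (ZMod (p ^ 2))ˣ) * iota p (k i)) = r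
          then ∏ i, ψ ↑((u i : (ZMod (p ^ 2))ˣ) * iota p (k i)) else 0)
      = if ∀ i, u i = u 0 then
          (if (∏ i, (u i : (ZMod (p ^ 2))ˣ)) = 1 then
            (p : ℂ) ^ D * (ψ (∑ i, ((u i : (ZMod (p ^ 2))ˣ) : ZMod (p ^ 2)))
              * ψ1 (pi0 p ((u 0 : (ZMod (p ^ 2))ˣ) : ZMod (p ^ 2)) * s))
          else 0)
        else 0 := by
    intro u
    set c : Fin (D + 1) → ZMod p :=
      fun i => pi0 p ((u i : (ZMod (p ^ 2))ˣ) : ZMod (p ^ 2)) with hc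
    have hval : ∀ k : Fin (D + 1) → ZMod p,
        ∏ i, ψ ↑((u i : (ZMod (p ^ 2))ˣ) * iota p (k i))
          = ψ (∑ i, ((u i : (ZMod (p ^ 2))ˣ) : ZMod (p ^ 2))) * ψ1 (∑ i, c i * k i) := by
      intro k
      rw [← hom_map_sum ψ ψ.map_zero_eq_one (fun x y => ψ.map_add_eq_mul x y)]
      have hterm : ∑ i, (((u i : (ZMod (p ^ 2))ˣ) * iota p (k i) : (ZMod (p ^ 2))ˣ) : ZMod (p ^ 2))
          = (∑ i, ((u i : (ZMod (p ^ 2))ˣ) : ZMod (p ^ 2)))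
            + (p : ZMod (p ^ 2)) * ∑ i, ((u i : (ZMod (p ^ 2))ˣ) : ZMod (p ^ 2))
                * (((k i).val : ℕ) : ZMod (p ^ 2)) := by
        rw [Finset.mul_sum, ← Finset.sum_add_distrib]
        refine Finset.sum_congr rfl fun i _ => ?_
        rw [Units.val_mul, iota_coe]
        unfold iotaval
        ring
      rw [hterm, ψ.map_add_eq_mul, hψp]
      congr 2
      rw [map_sum]
      refine Finset.sum_congr rfl fun i _ => ?_
      rw [map_mul, map_natCast]
      congr 1
      rw [ZMod.natCast_val, ZMod.cast_id]
    have hcond2 : ∀ k : Fin (D + 1) → ZMod p,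
        (∏ i, ((u i : (ZMod (p ^ 2))ˣ) * iota p (k i)) = r)
          ↔ ((∏ i, (u i : (ZMod (p ^ 2))ˣ)) = 1 ∧ ∑ i, k i = s) := by
      intro k
      have hprod : ∏ i, ((u i : (ZMod (p ^ 2))ˣ) * iota p (k i))
          = (∏ i, (u i : (ZMod (p ^ 2))ˣ)) * iota p (∑ i, k i) := by
        rw [Finset.prod_mul_distrib, hom_map_sum (iota p) iota_zero iota_add]
      rw [hprod, hs]
      constructor
      · intro h
        have e1 : iota p s = iota p (s - ∑ i, k i) * iota p (∑ i, k i) := by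
          rw [← iota_add, sub_add_cancel]
        rw [e1] at h
        have h2 : (∏ i, (u i : (ZMod (p ^ 2))ˣ)) = iota p (s - ∑ i, k i) :=
          mul_right_cancel h
        have hP : (∏ i, (u i : (ZMod (p ^ 2))ˣ)) ^ (p - 1) = 1 := by
          rw [← Finset.prod_pow]
          exact Finset.prod_eq_one fun i _ => (u i).2
        rw [h2] at hP
        have hone : iota p (s - ∑ i, k i) = 1 := tors_eq_one hP (iota_pow_p _)
        have hsk : s - ∑ i, k i = 0 := iota_inj (by rw [hone, iota_zero])
        exact ⟨by rw [h2, hone], by linear_combination -hsk⟩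
      · rintro ⟨h1, h2⟩
        rw [h1, h2, one_mul]
    have hbody : ∀ k : Fin (D + 1) → ZMod p,
        (if ∏ i, ((u i : (ZMod (p ^ 2))ˣ) * iota p (k i)) = r
          then ∏ i, ψ ↑((u i : (ZMod (p ^ 2))ˣ) * iota p (k i)) else 0)
        = if (∏ i, (u i : (ZMod (p ^ 2))ˣ)) = 1 then
            ψ (∑ i, ((u i : (ZMod (p ^ 2))ˣ) : ZMod (p ^ 2)))
              * (if ∑ i, k i = s then ψ1 (∑ i, c i * k i) else 0)
          else 0 := by
      intro k
      by_cases h1 : (∏ i, (u i : (ZMod (p ^ 2))ˣ)) = 1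
      · by_cases h2 : ∑ i, k i = s
        · rw [if_pos ((hcond2 k).mpr ⟨h1, h2⟩), if_pos h1, if_pos h2, hval k]
        · rw [if_neg (fun hh => h2 ((hcond2 k).mp hh).2), if_pos h1, if_neg h2, mul_zero]
      · rw [if_neg (fun hh => h1 ((hcond2 k).mp hh).1), if_neg h1]
    rw [Finset.sum_congr rfl fun k _ => hbody k]
    by_cases h1 : (∏ i, (u i : (ZMod (p ^ 2))ˣ)) = 1
    · rw [Finset.sum_congr rfl fun k _ => if_pos h1, ← Finset.mul_sum, inner_sum_aux c s]
      have hceq : (∀ i, c i = c 0) ↔ (∀ i, u i = u 0) := by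
        constructor
        · intro h i
          exact Subtype.ext (pi0_inj_tors (u i).2 (u 0).2 (h i))
        · intro h i
          simp only [hc]
          rw [h i]
      by_cases h2 : ∀ i, u i = u 0
      · rw [if_pos (hceq.mpr h2), if_pos h2, if_pos h1]
        ring
      · rw [if_neg (fun hh => h2 (hceq.mp hh)), if_neg h2, mul_zero]
    · rw [Finset.sum_congr rfl fun k _ => if_neg h1, Finset.sum_const_zero]
      by_cases h2 : ∀ i, u i = u 0
      · rw [if_pos h2, if_neg h1]
      · rw [if_neg h2]
  rw [hKe, Finset.sum_congr rfl fun u _ => hinner u, sum_tuple_const]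
  have hrw : ∀ v : {v : (ZMod (p ^ 2))ˣ // v ^ (p - 1) = 1},
      (if (∏ _i : Fin (D + 1), (v : (ZMod (p ^ 2))ˣ)) = 1 then
        (p : ℂ) ^ D * (ψ (∑ _i : Fin (D + 1), ((v : (ZMod (p ^ 2))ˣ) : ZMod (p ^ 2)))
          * ψ1 (pi0 p ((v : (ZMod (p ^ 2))ˣ) : ZMod (p ^ 2)) * s))
      else 0)
      = if (v : (ZMod (p ^ 2))ˣ) ^ (D + 1) = 1 then
          (p : ℂ) ^ D * ζ ^ ((∑ _i : Fin (D + 1), ((v : (ZMod (p ^ 2))ˣ) : ZMod (p ^ 2))).val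
            + p * ((pi0 p ((v : (ZMod (p ^ 2))ˣ) : ZMod (p ^ 2)) * s).val))
        else 0 := by
    intro v
    have hcc : (∏ _i : Fin (D + 1), (v : (ZMod (p ^ 2))ˣ)) = (v : (ZMod (p ^ 2))ˣ) ^ (D + 1) := by
      rw [Finset.prod_const, Finset.card_univ, Fintype.card_fin]
    rw [hcc, hψζ, hψ1ζ, ← pow_add]
  rw [Finset.sum_congr rfl fun v _ => hrw v, ← Finset.sum_filter, ← Finset.mul_sum]
  apply mul_ne_zero (pow_ne_zero _ hpC)
  apply sum_zeta_pow_ne_zero hζ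
  · exact ⟨⟨1, one_pow _⟩, by simp⟩
  · set A := Finset.univ.filter
      (fun v : {v : (ZMod (p ^ 2))ˣ // v ^ (p - 1) = 1} =>
        (v : (ZMod (p ^ 2))ˣ) ^ (D + 1) = 1) with hA
    have hinj : Set.InjOn
        (fun v : {v : (ZMod (p ^ 2))ˣ // v ^ (p - 1) = 1} =>
          pi0 p ((v : (ZMod (p ^ 2))ˣ) : ZMod (p ^ 2))) A :=
      fun v _ w _ h => Subtype.ext (pi0_inj_tors v.2 w.2 h)
    have hle : A.card ≤ p - 1 := by
      calc A.card
          = (A.image (fun v : {v : (ZMod (p ^ 2))ˣ // v ^ (p - 1) = 1} =>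
              pi0 p ((v : (ZMod (p ^ 2))ˣ) : ZMod (p ^ 2)))).card :=
            (Finset.card_image_of_injOn hinj).symm
        _ ≤ (Finset.univ.erase (0 : ZMod p)).card := by
            apply Finset.card_le_card
            intro x hx
            obtain ⟨v, _, rfl⟩ := Finset.mem_image.mp hx
            refine Finset.mem_erase.mpr ⟨?_, Finset.mem_univ _⟩
            exact (((v : (ZMod (p ^ 2))ˣ).isUnit.map (pi0 p)).ne_zero)
        _ = p - 1 := by
            rw [Finset.card_erase_of_mem (Finset.mem_univ _), Finset.card_univ, ZMod.card]
    have := hp.one_lt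
    omega
end

section
/- Let p be an odd prime and m a positive integer with p ∤ m. Let η_1, …, η_k be odd primitive Dirichlet characters modulo m (i.e., η_t(−1) = −1 and each η_t has conductor m) and let a_1, …, a_k ∈ ℂ be constants such that Σ_{t=1}^{k} a_t η_t(n) = 0 for every positive integer n with gcd(n, p) = 1 and n^{p−1} ≢ 1 (mod p²). Then Σ_{t=1}^{k} a_t τ(η_t) η_t(p²) = 0, and moreover for every odd prime q with q ∤ pm one has Σ_{t=1}^{k} a_t τ(η_t) η_t(p² q) = 0. (This is the case K = ℚ of the paper's proposition on determination of characters by their norm averages.) -/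
open scoped BigOperators

lemma one_add_pow_of_sq_eq_zero {R : Type*} [CommRing R] (x : R) (hx : x * x = 0) (k : ℕ) :
    (1 + x) ^ k = 1 + (k : R) * x := by
  induction k with
  | zero => simp
  | succ k ih =>
    rw [pow_succ, ih]
    push_cast
    linear_combination (k : R) * hx

theorem stmt12 (p : ℕ) [Fact p.Prime] (hodd : Odd p)
    (m : ℕ) (hm : 0 < m) (hpm : ¬ p ∣ m)
    (k : ℕ) (η : Fin k → DirichletCharacter ℂ m) (a : Fin k → ℂ)
    (hoddchar : ∀ t, η t (-1) = -1)
    (hprim : ∀ t, (η t).IsPrimitive)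
    (hvanish : ∀ n : ℕ, 0 < n → Nat.gcd n p = 1 → (n : ZMod (p ^ 2)) ^ (p - 1) ≠ 1 →
      ∑ t, a t * η t ((n : ZMod m)) = 0) :
    (∑ t, a t * tau (η t) * η t (((p ^ 2 : ℕ) : ZMod m))) = 0 ∧
      ∀ q : ℕ, q.Prime → Odd q → ¬ q ∣ p * m →
        (∑ t, a t * tau (η t) * η t (((p ^ 2 * q : ℕ) : ZMod m))) = 0 := by
  have hp : p.Prime := Fact.out
  haveI : NeZero m := ⟨hm.ne'⟩
  haveI : NeZero (p ^ 2) := ⟨pow_ne_zero 2 hp.ne_zero⟩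
  have hcop : Nat.Coprime m (p ^ 2) :=
    (Nat.coprime_comm.mp (hp.coprime_iff_not_dvd.mpr hpm)).pow_right 2
  -- Step 1: the character combination vanishes at EVERY residue class mod m
  have key : ∀ c : ZMod m, ∑ t, a t * η t c = 0 := by
    intro c
    set ψ := ZMod.chineseRemainder hcop with hψ
    set x := ψ.symm (c, ((1 + p : ℕ) : ZMod (p ^ 2))) with hx
    set n := x.val + m * p ^ 2 with hn
    have hψx : ψ x = (c, ((1 + p : ℕ) : ZMod (p ^ 2))) := ψ.apply_symm_apply _
    haveI : NeZero (m * p ^ 2) := ⟨mul_ne_zero hm.ne' (pow_ne_zero 2 hp.ne_zero)⟩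
    have hxm : ((x.val : ℕ) : ZMod m) = c := by
      have := congrArg Prod.fst hψx
      simpa [hψ, ZMod.chineseRemainder, ZMod.castHom_apply, ZMod.natCast_val] using this
    have hxp : ((x.val : ℕ) : ZMod (p ^ 2)) = ((1 + p : ℕ) : ZMod (p ^ 2)) := by
      have := congrArg Prod.snd hψx
      simpa [hψ, ZMod.chineseRemainder, ZMod.castHom_apply, ZMod.natCast_val] using this
    have hn1 : (n : ZMod m) = c := by
      rw [hn]; push_cast; rw [hxm]; simp
    have hp2 : ((p : ZMod (p ^ 2))) ^ 2 = 0 := by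
      rw [← Nat.cast_pow]; exact ZMod.natCast_self _
    have hn2 : (n : ZMod (p ^ 2)) = ((1 + p : ℕ) : ZMod (p ^ 2)) := by
      rw [hn]; push_cast [hxp]; rw [hp2]; ring
    have hnpos : 0 < n := by
      have : 0 < m * p ^ 2 := Nat.mul_pos hm (pow_pos hp.pos 2)
      omega
    have hgcd : Nat.gcd n p = 1 := by
      have hpn : ¬ p ∣ n := by
        intro hdvd
        have h0 : (n : ZMod p) = 0 := (ZMod.natCast_eq_zero_iff n p).mpr hdvd
        have h2 : (n : ZMod p) = 1 := by
          have := congrArg (ZMod.castHom (dvd_pow_self p two_ne_zero) (ZMod p)) hn2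
          simp only [map_natCast] at this
          rw [this]
          push_cast
          simp
        rw [h2] at h0
        exact one_ne_zero h0
      exact Nat.coprime_comm.mp (hp.coprime_iff_not_dvd.mpr hpn)
    have hpow : (n : ZMod (p ^ 2)) ^ (p - 1) ≠ 1 := by
      rw [hn2]
      push_cast
      have hsq : (p : ZMod (p ^ 2)) * p = 0 := by
        have : ((p ^ 2 : ℕ) : ZMod (p ^ 2)) = 0 := ZMod.natCast_self _
        push_cast at this
        rw [← this]; ring
      rw [one_add_pow_of_sq_eq_zero _ hsq]
      intro hcontra
      have h0 : ((p - 1 : ℕ) : ZMod (p ^ 2)) * p = 0 := by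
        have := hcontra
        rwa [add_eq_left] at this
      have : (((p - 1) * p : ℕ) : ZMod (p ^ 2)) = 0 := by push_cast; exact h0
      rw [ZMod.natCast_eq_zero_iff] at this
      have hdvd : p ∣ p - 1 := by
        have h2 : p * p ∣ (p - 1) * p := by rwa [← pow_two]
        exact (Nat.mul_dvd_mul_iff_right hp.pos).mp h2
      have hp2le : 2 ≤ p := hp.two_le
      have : p ≤ p - 1 := Nat.le_of_dvd (by omega) hdvd
      omega
    have := hvanish n hnpos hgcd hpow
    rwa [hn1] at this
  -- Step 2: the Gauss-sum combination vanishes at every x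
  have main : ∀ x : ZMod m, ∑ t, a t * tau (η t) * η t x = 0 := by
    intro x
    have step : ∀ t : Fin k, a t * tau (η t) * η t x
        = ∑ b : ZMod m, e ((b.val : ℂ) / m) * (a t * η t (b * x)) := by
      intro t
      rw [tau, finsum_eq_sum_of_fintype, Finset.mul_sum, Finset.sum_mul]
      refine Finset.sum_congr rfl fun b _ => ?_
      rw [map_mul]
      ring
    rw [Finset.sum_congr rfl (fun t _ => step t), Finset.sum_comm]
    refine Finset.sum_eq_zero fun b _ => ?_
    rw [← Finset.mul_sum, key (b * x), mul_zero]
  exact ⟨main _, fun q _ _ _ => main _⟩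
end

section
/- Let p be an odd prime, m a positive integer with p ∤ m, and η an odd primitive Dirichlet character modulo m with values in ℂ. Then the subfield of ℂ generated over ℚ by the values η(q), as q ranges over the odd primes not dividing pm, is contained in the subfield of ℂ generated over ℚ by the values η(n), as n ranges over the positive integers with gcd(n, p) = 1 and n^{p−1} ≢ 1 (mod p²). (This is the case K = ℚ of the paper's theorem that ℚ(η_f′) ⊆ ℚ(c_η°).) -/
open scoped BigOperators

private lemma aux_pow {R : Type*} [CommRing R] (x : R) (hx : x ^ 2 = 0) (k : ℕ) :
    (1 + x) ^ k = 1 + (k : R) * x := by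
  induction k with
  | zero => simp
  | succ k ih =>
    rw [pow_succ, ih]
    push_cast
    linear_combination (k : R) * hx

theorem stmt13 (p : ℕ) [Fact p.Prime] (hodd : Odd p)
    (m : ℕ) (hm : 0 < m) (hpm : ¬ p ∣ m)
    (η : DirichletCharacter ℂ m) (hoddchar : η (-1) = -1) (hprim : η.IsPrimitive) :
    Subfield.closure {z : ℂ | ∃ q : ℕ, q.Prime ∧ Odd q ∧ ¬ q ∣ p * m ∧
        z = η ((q : ZMod m))} ≤
      Subfield.closure {z : ℂ | ∃ n : ℕ, 0 < n ∧ Nat.gcd n p = 1 ∧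
        (n : ZMod (p ^ 2)) ^ (p - 1) ≠ 1 ∧ z = η ((n : ZMod m))} := by
  have hp : p.Prime := Fact.out
  have hp2 : 2 ≤ p := hp.two_le
  refine Subfield.closure_le.mpr fun z hz => Subfield.subset_closure ?_
  obtain ⟨q, hq, -, hqpm, rfl⟩ := hz
  have hcop : Nat.Coprime m (p ^ 2) :=
    ((hp.coprime_iff_not_dvd.mpr hpm).pow_left 2).symm
  obtain ⟨k, hk1, hk2⟩ := Nat.chineseRemainder hcop q (1 + p)
  set n : ℕ := k + m * p ^ 2 with hn
  have hnm : n ≡ q [MOD m] := by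
    calc n ≡ k + 0 [MOD m] := Nat.ModEq.add_left k (Nat.modEq_zero_iff_dvd.mpr ⟨p ^ 2, rfl⟩)
    _ = k := by ring
    _ ≡ q [MOD m] := hk1
  have hnp2 : n ≡ 1 + p [MOD p ^ 2] := by
    calc n ≡ k + 0 [MOD p ^ 2] :=
      Nat.ModEq.add_left k (Nat.modEq_zero_iff_dvd.mpr ⟨m, mul_comm m (p ^ 2)⟩)
    _ = k := by ring
    _ ≡ 1 + p [MOD p ^ 2] := hk2
  have hnp : n ≡ 1 [MOD p] := by
    calc n ≡ 1 + p [MOD p] := hnp2.of_dvd (dvd_pow_self p two_ne_zero)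
    _ ≡ 1 + 0 [MOD p] := Nat.ModEq.add_left 1 (Nat.modEq_zero_iff_dvd.mpr dvd_rfl)
    _ = 1 := by ring
  have hpn : ¬ p ∣ n := by
    intro h
    have h0 : n % p = 1 % p := hnp
    rw [Nat.mod_eq_zero_of_dvd h, Nat.one_mod_eq_one.mpr (by omega)] at h0
    omega
  have hpos : 0 < n := by
    have : 0 < m * p ^ 2 := by positivity
    omega
  have hgcd : Nat.gcd n p = 1 := (Nat.coprime_comm.mpr (hp.coprime_iff_not_dvd.mpr hpn))
  have hpsq : ((p : ZMod (p ^ 2))) ^ 2 = 0 := by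
    have := ZMod.natCast_self (p ^ 2)
    push_cast at this
    exact this
  have hcast2 : ((n : ℕ) : ZMod (p ^ 2)) = 1 + (p : ZMod (p ^ 2)) := by
    have := (ZMod.natCast_eq_natCast_iff n (1 + p) (p ^ 2)).mpr hnp2
    push_cast at this
    exact this
  have hne : ((n : ZMod (p ^ 2))) ^ (p - 1) ≠ 1 := by
    rw [hcast2, aux_pow _ hpsq]
    intro h
    have h0 : (((p - 1) * p : ℕ) : ZMod (p ^ 2)) = 0 := by
      push_cast
      linear_combination h
    rw [ZMod.natCast_eq_zero_iff] at h0
    have h1 : (p - 1) * p < p ^ 2 := by nlinarith [Nat.sub_lt (by omega : 0 < p) one_pos]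
    have h2 : 0 < (p - 1) * p := by
      have : 1 ≤ p - 1 := by omega
      nlinarith
    exact absurd (Nat.le_of_dvd h2 h0) (not_le.mpr h1)
  have hcastm : ((n : ℕ) : ZMod m) = ((q : ℕ) : ZMod m) :=
    (ZMod.natCast_eq_natCast_iff n q m).mpr hnm
  exact ⟨n, hpos, hgcd, hne, by rw [hcastm]⟩
end
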